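/- arXiv:1001.0562 — 10 statements merged into one kernel-verified Lean document; each statement's English description precedes it below -/
import Mathlib

section
/- Let t = ln r and define X(t) = -r u'(r)/u(r), Y(t) = -r v'(r)/v(r), Z(t) = -ε₁ r^{1+a} u^s v^δ u'(r)/|u'(r)|^p, W(t) = -ε₂ r^{1+b} u^μ v^m v'(r)/|v'(r)|^q for a radial solution (u,v) of the system -Δ_p u = ε₁ |x|^a u^s v^δ, -Δ_q v = ε₂ |x|^b u^μ v^m with u, v > 0 and u', v' ≠ 0. Then (X,Y,Z,W) satisfies the autonomous quadratic system X_t = X[X - (N-p)/(p-1) + Z/(p-1)], Y_t = Y[Y - (N-q)/(q-1) + W/(q-1)], Z_t = Z[N + a - sX - δY - Z], W_t = W[N + b - μX - mY - W]. -/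
open Real Set Topology

private lemma sign_const (f φ : ℝ → ℝ) (S : Set ℝ) (hS : S.OrdConnected)
    (hf : ∀ r ∈ S, f r ≠ 0)
    (hφ : ContinuousOn φ S)
    (hsame : ∀ r ∈ S, (0 < f r → 0 < φ r) ∧ (f r < 0 → φ r < 0)) :
    ∃ c : ℝ, (c = 1 ∨ c = -1) ∧ ∀ r ∈ S, 0 < c * f r := by
  rcases S.eq_empty_or_nonempty with h | ⟨r₀, hr₀⟩
  · exact ⟨1, Or.inl rfl, by simp [h]⟩
  have key : ∀ r₁ ∈ S, ∀ r₂ ∈ S, φ r₁ ≤ 0 → 0 ≤ φ r₂ → False := by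
    intro r₁ h₁ r₂ h₂ hle hge
    have hsub : Set.uIcc r₁ r₂ ⊆ S := hS.uIcc_subset h₁ h₂
    have h0 : (0:ℝ) ∈ Set.uIcc (φ r₁) (φ r₂) := Set.mem_uIcc.2 (Or.inl ⟨hle, hge⟩)
    obtain ⟨x, hx, hφx⟩ := intermediate_value_uIcc (hφ.mono hsub) h0
    have hxS := hsub hx
    rcases (hf x hxS).lt_or_gt with h | h
    · exact absurd hφx (ne_of_lt ((hsame x hxS).2 h))
    · exact absurd hφx (ne_of_gt ((hsame x hxS).1 h))
  rcases (hf r₀ hr₀).lt_or_gt with h0 | h0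
  · refine ⟨-1, Or.inr rfl, fun r hr => ?_⟩
    rcases (hf r hr).lt_or_gt with h | h
    · rw [neg_one_mul]; exact neg_pos.2 h
    · exact ((key r₀ hr₀ r hr ((hsame r₀ hr₀).2 h0).le ((hsame r hr).1 h).le)).elim
  · refine ⟨1, Or.inl rfl, fun r hr => ?_⟩
    rcases (hf r hr).lt_or_gt with h | h
    · exact ((key r hr r₀ hr₀ ((hsame r hr).2 h).le ((hsame r₀ hr₀).1 h0).le)).elim
    · rw [one_mul]; exact h

set_option maxHeartbeats 3000000 in
private lemma one_eq (N p a ε s δ : ℝ) (hp : p ≠ 1) (hε : ε = 1 ∨ ε = -1)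
    (u w u' w' : ℝ → ℝ) (R₁ R₂ : ℝ) (hR : 0 < R₁)
    (hu : ∀ r ∈ Ioo R₁ R₂, HasDerivAt u (u' r) r)
    (hw : ∀ r ∈ Ioo R₁ R₂, HasDerivAt w (w' r) r)
    (hupos : ∀ r ∈ Ioo R₁ R₂, 0 < u r)
    (hwpos : ∀ r ∈ Ioo R₁ R₂, 0 < w r)
    (hu' : ∀ r ∈ Ioo R₁ R₂, u' r ≠ 0)
    (hpde : ∀ r ∈ Ioo R₁ R₂,
      HasDerivAt (fun ρ => ρ ^ (N - 1) * |u' ρ| ^ (p - 2) * u' ρ)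
        (-ε * r ^ (N - 1 + a) * u r ^ s * w r ^ δ) r)
    (t : ℝ) (ht : exp t ∈ Ioo R₁ R₂) :
    HasDerivAt (fun τ => -(exp τ * u' (exp τ)) / u (exp τ))
      ((-(exp t * u' (exp t)) / u (exp t)) *
        ((-(exp t * u' (exp t)) / u (exp t)) - (N - p) / (p - 1) +
          (-ε * exp t ^ (1 + a) * u (exp t) ^ s * w (exp t) ^ δ
            * u' (exp t) / |u' (exp t)| ^ p) / (p - 1))) t ∧
    HasDerivAt (fun τ => -ε * exp τ ^ (1 + a) * u (exp τ) ^ s * w (exp τ) ^ δ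
        * u' (exp τ) / |u' (exp τ)| ^ p)
      ((-ε * exp t ^ (1 + a) * u (exp t) ^ s * w (exp t) ^ δ
          * u' (exp t) / |u' (exp t)| ^ p) *
        (N + a - s * (-(exp t * u' (exp t)) / u (exp t))
           - δ * (-(exp t * w' (exp t)) / w (exp t))
           - (-ε * exp t ^ (1 + a) * u (exp t) ^ s * w (exp t) ^ δ
              * u' (exp t) / |u' (exp t)| ^ p))) t := by
  have hrpos : 0 < exp t := exp_pos t
  have hupos' := hupos _ ht
  have hwpos' := hwpos _ ht
  have hu'r := hu' _ ht
  have hp1 : p - 1 ≠ 0 := sub_ne_zero.2 hp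
  -- constant sign of u'
  obtain ⟨c, hc, hcs⟩ := sign_const u'
      (fun ρ => ρ ^ (N - 1) * |u' ρ| ^ (p - 2) * u' ρ) (Ioo R₁ R₂)
      Set.ordConnected_Ioo hu'
      (fun x hx => (hpde x hx).continuousAt.continuousWithinAt)
      (by
        intro x hx
        have hx0 : 0 < x := hR.trans hx.1
        have hcoef : 0 < x ^ (N - 1) * |u' x| ^ (p - 2) :=
          mul_pos (rpow_pos_of_pos hx0 _) (rpow_pos_of_pos (abs_pos.2 (hu' x hx)) _)
        exact ⟨fun h => mul_pos hcoef h, fun h => mul_neg_of_pos_of_neg hcoef h⟩)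
  have hcc : c * c = 1 := by rcases hc with rfl | rfl <;> norm_num
  have habs : ∀ x ∈ Ioo R₁ R₂, |u' x| = c * u' x := by
    intro x hx
    rcases hc with rfl | rfl
    · rw [one_mul]; exact abs_of_pos (by simpa using hcs x hx)
    · have h : u' x < 0 := by have := hcs x hx; nlinarith
      rw [abs_of_neg h]; ring
  have hgpos : 0 < c * u' (exp t) := hcs _ ht
  have hnbhd : ∀ᶠ τ in 𝓝 t, exp τ ∈ Ioo R₁ R₂ :=
    (isOpen_Ioo.preimage continuous_exp).eventually_mem ht
  -- key pointwise identity
  have key : ∀ τ : ℝ, exp τ ∈ Ioo R₁ R₂ →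
      c * (exp τ ^ (N - 1) * |u' (exp τ)| ^ (p - 2) * u' (exp τ)) * exp ((1 - N) * τ)
        = (c * u' (exp τ)) ^ (p - 1) := by
    intro τ hτ
    have hρ : 0 < exp τ := exp_pos τ
    have hg : 0 < c * u' (exp τ) := hcs _ hτ
    rw [habs _ hτ, mul_comm (1 - N) τ, exp_mul]
    have h2 : exp τ ^ (N - 1) * exp τ ^ (1 - N) = 1 := by
      rw [← rpow_add hρ, show N - 1 + (1 - N) = (0:ℝ) by ring, rpow_zero]
    have h3 : (c * u' (exp τ)) ^ (p - 2) * (c * u' (exp τ)) = (c * u' (exp τ)) ^ (p - 1) := by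
      rw [← rpow_add_one hg.ne']; congr 1; ring
    calc c * (exp τ ^ (N - 1) * (c * u' (exp τ)) ^ (p - 2) * u' (exp τ)) * exp τ ^ (1 - N)
        = (exp τ ^ (N - 1) * exp τ ^ (1 - N)) *
            ((c * u' (exp τ)) ^ (p - 2) * (c * u' (exp τ))) := by ring
      _ = (c * u' (exp τ)) ^ (p - 1) := by rw [h2, h3, one_mul]
  -- derivative of τ ↦ u' (exp τ)
  have hΦ : HasDerivAt (fun τ => exp τ ^ (N - 1) * |u' (exp τ)| ^ (p - 2) * u' (exp τ))
      ((-ε * exp t ^ (N - 1 + a) * u (exp t) ^ s * w (exp t) ^ δ) * exp t) t :=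
    (hpde _ ht).comp t (Real.hasDerivAt_exp t)
  have hE : HasDerivAt (fun τ => exp ((1 - N) * τ)) ((1 - N) * exp ((1 - N) * t)) t := by
    have h1 : HasDerivAt (fun τ : ℝ => (1 - N) * τ) (1 - N) t := by
      simpa using (hasDerivAt_id t).const_mul (1 - N)
    have h2 := (Real.hasDerivAt_exp ((1 - N) * t)).comp t h1
    simpa [Function.comp_def, mul_comm, mul_one] using h2
  have hI : HasDerivAt
      (fun τ => c * (exp τ ^ (N - 1) * |u' (exp τ)| ^ (p - 2) * u' (exp τ)) * exp ((1 - N) * τ))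
      (c * ((-ε * exp t ^ (N - 1 + a) * u (exp t) ^ s * w (exp t) ^ δ) * exp t) * exp ((1 - N) * t)
        + c * (exp t ^ (N - 1) * |u' (exp t)| ^ (p - 2) * u' (exp t)) * ((1 - N) * exp ((1 - N) * t))) t :=
    (hΦ.const_mul c).mul hE
  have hIt := key t ht
  have hIne : c * (exp t ^ (N - 1) * |u' (exp t)| ^ (p - 2) * u' (exp t)) * exp ((1 - N) * t) ≠ 0 := by
    rw [hIt]; exact (rpow_pos_of_pos hgpos _).ne'
  have hΨ := (hI.rpow_const (p := (p - 1)⁻¹) (Or.inl hIne)).const_mul c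
  have heq : (fun τ => u' (exp τ)) =ᶠ[𝓝 t]
      (fun τ => c * (c * (exp τ ^ (N - 1) * |u' (exp τ)| ^ (p - 2) * u' (exp τ))
        * exp ((1 - N) * τ)) ^ (p - 1)⁻¹) := by
    filter_upwards [hnbhd] with τ hτ
    rw [key τ hτ, rpow_rpow_inv (hcs _ hτ).le hp1, ← mul_assoc, hcc, one_mul]
  have hG0 : HasDerivAt (fun τ => u' (exp τ))
      (c * ((c * ((-ε * exp t ^ (N - 1 + a) * u (exp t) ^ s * w (exp t) ^ δ) * exp t) * exp ((1 - N) * t)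
        + c * (exp t ^ (N - 1) * |u' (exp t)| ^ (p - 2) * u' (exp t)) * ((1 - N) * exp ((1 - N) * t)))
        * (p - 1)⁻¹
        * (c * (exp t ^ (N - 1) * |u' (exp t)| ^ (p - 2) * u' (exp t)) * exp ((1 - N) * t))
            ^ ((p - 1)⁻¹ - 1))) t :=
    hΨ.congr_of_eventuallyEq heq
  -- clean up the derivative value
  have hGval : c * ((c * ((-ε * exp t ^ (N - 1 + a) * u (exp t) ^ s * w (exp t) ^ δ) * exp t) * exp ((1 - N) * t)
        + c * (exp t ^ (N - 1) * |u' (exp t)| ^ (p - 2) * u' (exp t)) * ((1 - N) * exp ((1 - N) * t)))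
        * (p - 1)⁻¹
        * (c * (exp t ^ (N - 1) * |u' (exp t)| ^ (p - 2) * u' (exp t)) * exp ((1 - N) * t))
            ^ ((p - 1)⁻¹ - 1))
      = u' (exp t) *
        ((-ε * exp t ^ (1 + a) * u (exp t) ^ s * w (exp t) ^ δ
            * u' (exp t) / |u' (exp t)| ^ p - (N - 1)) / (p - 1)) := by
    rw [hIt]
    have hpow : ((c * u' (exp t)) ^ (p - 1)) ^ ((p - 1)⁻¹ - 1)
        = (c * u' (exp t)) ^ (2 - p) := by
      rw [← rpow_mul hgpos.le]; congr 1; field_simp; ring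
    rw [hpow, habs _ ht, mul_comm (1 - N) t, exp_mul]
    have hBp : (0:ℝ) < (c * u' (exp t)) ^ p := rpow_pos_of_pos hgpos p
    have d1 : exp t ^ (1 - N) = 1 / exp t ^ (N - 1) := by
      rw [eq_div_iff (rpow_pos_of_pos hrpos (N - 1)).ne', ← rpow_add hrpos,
        show 1 - N + (N - 1) = (0:ℝ) by ring, rpow_zero]
    have d2 : exp t ^ (N - 1 + a) = exp t ^ (1 + a) * exp t ^ (N - 1) / exp t := by
      rw [eq_div_iff hrpos.ne', ← rpow_add_one hrpos.ne', ← rpow_add hrpos]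
      congr 1; ring
    have d3 : (c * u' (exp t)) ^ (p - 2)
        = (c * u' (exp t)) ^ p / ((c * u' (exp t)) * (c * u' (exp t))) := by
      rw [eq_div_iff (by positivity), ← mul_assoc, ← rpow_add_one hgpos.ne',
        ← rpow_add_one hgpos.ne']
      congr 1; ring
    have d4 : (c * u' (exp t)) ^ (2 - p)
        = (c * u' (exp t)) * (c * u' (exp t)) / (c * u' (exp t)) ^ p := by
      rw [eq_div_iff hBp.ne', ← rpow_add hgpos,
        show 2 - p + p = (1:ℝ) + 1 by ring, rpow_add hgpos, rpow_one]
    rw [d2, d1, d3, d4]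
    generalize u (exp t) ^ s = Us
    generalize w (exp t) ^ δ = Wd
    generalize hA : exp t ^ (1 + a) = A
    generalize hB : exp t ^ (N - 1) = B
    generalize hP : (c * u' (exp t)) ^ p = P
    have hBne : B ≠ 0 := by rw [← hB]; exact (rpow_pos_of_pos hrpos _).ne'
    have hPne : P ≠ 0 := by rw [← hP]; exact (rpow_pos_of_pos hgpos _).ne'
    generalize hG : u' (exp t) = G at hgpos ⊢
    generalize hE : exp t = E at hrpos ⊢
    have hEne : E ≠ 0 := hrpos.ne'
    have hGne : G ≠ 0 := by
      intro h; rw [h, mul_zero] at hgpos; exact lt_irrefl 0 hgpos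
    clear * - hc hGne hEne hBne hPne hp1
    rcases hc with rfl | rfl <;>
      simp only [one_mul, neg_one_mul, neg_neg] <;>
      field_simp <;> ring
  rw [hGval] at hG0
  -- derivatives of u∘exp, w∘exp
  have hfu : HasDerivAt (fun τ => u (exp τ)) (u' (exp t) * exp t) t :=
    (hu _ ht).comp t (Real.hasDerivAt_exp t)
  have hfw : HasDerivAt (fun τ => w (exp τ)) (w' (exp t) * exp t) t :=
    (hw _ ht).comp t (Real.hasDerivAt_exp t)
  constructor
  · -- X equation
    have hnum : HasDerivAt (fun τ => -(exp τ * u' (exp τ)))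
        (-(exp t * u' (exp t) + exp t * (u' (exp t) *
          ((-ε * exp t ^ (1 + a) * u (exp t) ^ s * w (exp t) ^ δ
            * u' (exp t) / |u' (exp t)| ^ p - (N - 1)) / (p - 1))))) t :=
      ((Real.hasDerivAt_exp t).mul hG0).neg
    have hdiv := hnum.div hfu hupos'.ne'
    convert hdiv using 1
    any_goals with_reducible_and_instances rfl
    have hAne : |u' (exp t)| ^ p ≠ 0 := (rpow_pos_of_pos (abs_pos.2 hu'r) _).ne'
    field_simp
    ring
  · -- Z equation
    have hP1 : HasDerivAt (fun τ => exp τ ^ (1 + a))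
        (exp t * (1 + a) * exp t ^ (1 + a - 1)) t :=
      (Real.hasDerivAt_exp t).rpow_const (Or.inl (exp_ne_zero t))
    have hP2 : HasDerivAt (fun τ => u (exp τ) ^ s)
        (u' (exp t) * exp t * s * u (exp t) ^ (s - 1)) t :=
      hfu.rpow_const (Or.inl hupos'.ne')
    have hP3 : HasDerivAt (fun τ => w (exp τ) ^ δ)
        (w' (exp t) * exp t * δ * w (exp t) ^ (δ - 1)) t :=
      hfw.rpow_const (Or.inl hwpos'.ne')
    have hGc : HasDerivAt (fun τ => c * u' (exp τ))
        (c * (u' (exp t) *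
          ((-ε * exp t ^ (1 + a) * u (exp t) ^ s * w (exp t) ^ δ
            * u' (exp t) / |u' (exp t)| ^ p - (N - 1)) / (p - 1)))) t := hG0.const_mul c
    have hP4 : HasDerivAt (fun τ => (c * u' (exp τ)) ^ (1 - p))
        ((c * (u' (exp t) *
          ((-ε * exp t ^ (1 + a) * u (exp t) ^ s * w (exp t) ^ δ
            * u' (exp t) / |u' (exp t)| ^ p - (N - 1)) / (p - 1)))) * (1 - p)
          * (c * u' (exp t)) ^ (1 - p - 1)) t :=
      hGc.rpow_const (Or.inl hgpos.ne')
    have hprod := (((hP1.mul hP2).mul hP3).mul hP4).const_mul (-ε * c)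
    have heqZ : (fun τ => -ε * exp τ ^ (1 + a) * u (exp τ) ^ s * w (exp τ) ^ δ
        * u' (exp τ) / |u' (exp τ)| ^ p) =ᶠ[𝓝 t]
        (fun τ => -ε * c * (exp τ ^ (1 + a) * u (exp τ) ^ s * w (exp τ) ^ δ
          * (c * u' (exp τ)) ^ (1 - p))) := by
      filter_upwards [hnbhd] with τ hτ
      have hg : 0 < c * u' (exp τ) := hcs _ hτ
      rw [habs _ hτ, rpow_sub hg, rpow_one]
      rcases hc with rfl | rfl <;> ring
    have hZ0 := hprod.congr_of_eventuallyEq heqZ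
    convert hZ0 using 1
    any_goals with_reducible_and_instances rfl
    simp only [Pi.mul_apply]
    rw [habs _ ht]
    have hBp : (0:ℝ) < (c * u' (exp t)) ^ p := rpow_pos_of_pos hgpos p
    rw [Real.rpow_sub_one hrpos.ne', Real.rpow_sub_one hupos'.ne',
      Real.rpow_sub_one hwpos'.ne', Real.rpow_sub_one hgpos.ne']
    have d6 : (c * u' (exp t)) ^ (1 - p) = (c * u' (exp t)) / (c * u' (exp t)) ^ p := by
      rw [eq_div_iff hBp.ne', ← rpow_add hgpos, show 1 - p + p = (1:ℝ) by ring, rpow_one]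
    rw [d6]
    generalize hUs : u (exp t) ^ s = Us
    generalize hWd : w (exp t) ^ δ = Wd
    generalize hA : exp t ^ (1 + a) = A
    generalize hP : (c * u' (exp t)) ^ p = P
    have hPne : P ≠ 0 := by rw [← hP]; exact (rpow_pos_of_pos hgpos _).ne'
    generalize hG : u' (exp t) = G at hgpos ⊢
    generalize hU : u (exp t) = U at hupos' ⊢
    generalize hWv : w (exp t) = Wv at hwpos' ⊢
    generalize hE : exp t = E at hrpos ⊢
    have hEne : E ≠ 0 := hrpos.ne'
    have hUne : U ≠ 0 := hupos'.ne'
    have hWne : Wv ≠ 0 := hwpos'.ne'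
    have hGne : G ≠ 0 := by
      intro h; rw [h, mul_zero] at hgpos; exact lt_irrefl 0 hgpos
    clear * - hc hGne hEne hUne hWne hPne hp1
    rcases hc with rfl | rfl <;>
      simp only [one_mul, neg_one_mul, neg_neg] <;>
      field_simp <;> ring

/-- the substitution X = -ru'/u, Y = -rv'/v,
Z = -ε₁ r^{1+a} u^s v^δ u'/|u'|^p, W = -ε₂ r^{1+b} u^μ v^m v'/|v'|^q,
with t = ln r, transforms radial solutions of the Emden–Fowler system (G)
into solutions of the quadratic Kolmogorov-type autonomous system (M). -/
theorem quadratic_system_reduction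
    (N p q a b s m δ μ ε₁ ε₂ : ℝ)
    (hp : p ≠ 1) (hq : q ≠ 1)
    (hε₁ : ε₁ = 1 ∨ ε₁ = -1) (hε₂ : ε₂ = 1 ∨ ε₂ = -1)
    (u v u' v' : ℝ → ℝ) (R₁ R₂ : ℝ) (hR : 0 < R₁)
    (hu : ∀ r ∈ Set.Ioo R₁ R₂, HasDerivAt u (u' r) r)
    (hv : ∀ r ∈ Set.Ioo R₁ R₂, HasDerivAt v (v' r) r)
    (hupos : ∀ r ∈ Set.Ioo R₁ R₂, 0 < u r)
    (hvpos : ∀ r ∈ Set.Ioo R₁ R₂, 0 < v r)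
    (hu' : ∀ r ∈ Set.Ioo R₁ R₂, u' r ≠ 0)
    (hv' : ∀ r ∈ Set.Ioo R₁ R₂, v' r ≠ 0)
    (hpde1 : ∀ r ∈ Set.Ioo R₁ R₂,
      HasDerivAt (fun ρ => ρ ^ (N - 1) * |u' ρ| ^ (p - 2) * u' ρ)
        (-ε₁ * r ^ (N - 1 + a) * u r ^ s * v r ^ δ) r)
    (hpde2 : ∀ r ∈ Set.Ioo R₁ R₂,
      HasDerivAt (fun ρ => ρ ^ (N - 1) * |v' ρ| ^ (q - 2) * v' ρ)
        (-ε₂ * r ^ (N - 1 + b) * u r ^ μ * v r ^ m) r)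
    (X Y Z W : ℝ → ℝ)
    (hX : ∀ t, X t = -(exp t * u' (exp t)) / u (exp t))
    (hY : ∀ t, Y t = -(exp t * v' (exp t)) / v (exp t))
    (hZ : ∀ t, Z t = -ε₁ * (exp t) ^ (1 + a) * u (exp t) ^ s * v (exp t) ^ δ
        * u' (exp t) / |u' (exp t)| ^ p)
    (hW : ∀ t, W t = -ε₂ * (exp t) ^ (1 + b) * u (exp t) ^ μ * v (exp t) ^ m
        * v' (exp t) / |v' (exp t)| ^ q) :
    ∀ t : ℝ, exp t ∈ Set.Ioo R₁ R₂ →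
      HasDerivAt X (X t * (X t - (N - p) / (p - 1) + Z t / (p - 1))) t ∧
      HasDerivAt Y (Y t * (Y t - (N - q) / (q - 1) + W t / (q - 1))) t ∧
      HasDerivAt Z (Z t * (N + a - s * X t - δ * Y t - Z t)) t ∧
      HasDerivAt W (W t * (N + b - μ * X t - m * Y t - W t)) t := by
  intro t ht
  obtain ⟨hX1, hZ1⟩ := one_eq N p a ε₁ s δ hp hε₁ u v u' v' R₁ R₂ hR hu hv hupos hvpos
    hu' hpde1 t ht
  have hpde2' : ∀ r ∈ Set.Ioo R₁ R₂,
      HasDerivAt (fun ρ => ρ ^ (N - 1) * |v' ρ| ^ (q - 2) * v' ρ)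
        (-ε₂ * r ^ (N - 1 + b) * v r ^ m * u r ^ μ) r := by
    intro r hr
    have h := hpde2 r hr
    have e : -ε₂ * r ^ (N - 1 + b) * u r ^ μ * v r ^ m
        = -ε₂ * r ^ (N - 1 + b) * v r ^ m * u r ^ μ := by ring
    rw [e] at h; exact h
  obtain ⟨hY1, hW1⟩ := one_eq N q b ε₂ m μ hq hε₂ v u v' u' R₁ R₂ hR hv hu hvpos hupos
    hv' hpde2' t ht
  refine ⟨?_, ?_, ?_, ?_⟩
  · simp only [hX, hZ]
    rw [funext hX]
    convert hX1 using 1 <;> ring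
  · simp only [hY, hW]
    rw [funext hY]
    convert hY1 using 1 <;> ring
  · simp only [hX, hY, hZ]
    rw [funext hZ]
    convert hZ1 using 1 <;> ring
  · simp only [hX, hY, hW]
    have hfun : W = fun τ => -ε₂ * exp τ ^ (1 + b) * v (exp τ) ^ m * u (exp τ) ^ μ
        * v' (exp τ) / |v' (exp τ)| ^ q := funext fun τ => by rw [hW τ]; ring
    rw [hfun]
    convert hW1 using 1 <;> ring
end

section
/- The characteristic polynomial of the linearization at M₀ of the quadratic system, namely f(λ) = [(λ - X₀)(λ + Z₀) + (s/(p-1))X₀Z₀][(λ - Y₀)(λ + W₀) + (m/(q-1))Y₀W₀] - (δμ/((p-1)(q-1)))X₀Y₀Z₀W₀, has constant term -H with H = (D/((p-1)(q-1)))X₀Y₀Z₀W₀. Consequently, if X₀, Y₀, Z₀, W₀ > 0 and D = δμ - (p-1-s)(q-1-m) > 0, then f has at least one real root λ₃ < 0 and one real root λ₄ > 0. -/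
open Filter

private lemma quad_atTop (a b c : ℝ) :
    Tendsto (fun l : ℝ => (l - a) * (l + b) + c) atTop atTop := by
  apply tendsto_atTop_add_const_right
  exact Tendsto.atTop_mul_atTop₀ (tendsto_atTop_add_const_right _ _ tendsto_id)
    (tendsto_atTop_add_const_right _ _ tendsto_id)

private lemma quad_atBot (a b c : ℝ) :
    Tendsto (fun l : ℝ => (l - a) * (l + b) + c) atBot atTop := by
  apply tendsto_atTop_add_const_right
  exact Tendsto.atBot_mul_atBot₀ (tendsto_atBot_add_const_right _ _ tendsto_id)
    (tendsto_atBot_add_const_right _ _ tendsto_id)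

/-- the characteristic polynomial f of the linearization of
system (M) at M₀ has constant term -H with H = (D/((p-1)(q-1)))X₀Y₀Z₀W₀;
hence when X₀,Y₀,Z₀,W₀ > 0 and D > 0, f has a negative real root and a
positive real root. -/
theorem char_poly_real_roots
    (N p q a b s m δ μ γ ξ X₀ Y₀ Z₀ W₀ D : ℝ)
    (hp : 1 < p) (hq : 1 < q)
    (hDdef : D = δ * μ - (p - 1 - s) * (q - 1 - m))
    (hγ : (p - 1 - s) * γ + p + a = δ * ξ)
    (hξ : (q - 1 - m) * ξ + q + b = μ * γ)
    (hX₀ : X₀ = γ) (hY₀ : Y₀ = ξ)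
    (hZ₀ : Z₀ = N - p - (p - 1) * γ) (hW₀ : W₀ = N - q - (q - 1) * ξ)
    (f : ℝ → ℝ)
    (hf : ∀ l : ℝ, f l =
      ((l - X₀) * (l + Z₀) + (s / (p - 1)) * X₀ * Z₀) *
        ((l - Y₀) * (l + W₀) + (m / (q - 1)) * Y₀ * W₀) -
      (δ * μ / ((p - 1) * (q - 1))) * X₀ * Y₀ * Z₀ * W₀) :
    f 0 = -((D / ((p - 1) * (q - 1))) * X₀ * Y₀ * Z₀ * W₀) ∧
    (0 < X₀ → 0 < Y₀ → 0 < Z₀ → 0 < W₀ → 0 < D →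
      ∃ l₃ l₄ : ℝ, l₃ < 0 ∧ 0 < l₄ ∧ f l₃ = 0 ∧ f l₄ = 0) := by
  have hpp : (0:ℝ) < p - 1 := by linarith
  have hqq : (0:ℝ) < q - 1 := by linarith
  have h0 : f 0 = -((D / ((p - 1) * (q - 1))) * X₀ * Y₀ * Z₀ * W₀) := by
    rw [hf, hDdef]
    field_simp
    ring
  refine ⟨h0, fun hx hy hz hw hD => ?_⟩
  have hfeq : f = fun l =>
      ((l - X₀) * (l + Z₀) + (s / (p - 1)) * X₀ * Z₀) *
        ((l - Y₀) * (l + W₀) + (m / (q - 1)) * Y₀ * W₀) -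
      (δ * μ / ((p - 1) * (q - 1))) * X₀ * Y₀ * Z₀ * W₀ := funext hf
  have hcont : Continuous f := by rw [hfeq]; fun_prop
  have hf0 : f 0 < 0 := by
    rw [h0]
    have : 0 < (D / ((p - 1) * (q - 1))) * X₀ * Y₀ * Z₀ * W₀ := by positivity
    linarith
  have htop : Tendsto f atTop atTop := by
    rw [hfeq]
    exact tendsto_atTop_add_const_right _ _
      ((quad_atTop X₀ Z₀ _).atTop_mul_atTop₀ (quad_atTop Y₀ W₀ _))
  have hbot : Tendsto f atBot atTop := by
    rw [hfeq]
    exact tendsto_atTop_add_const_right _ _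
      ((quad_atBot X₀ Z₀ _).atTop_mul_atTop₀ (quad_atBot Y₀ W₀ _))
  obtain ⟨R, hR0, hRf⟩ : ∃ R : ℝ, 0 < R ∧ 0 < f R := by
    have := (htop.eventually_gt_atTop 0).and (eventually_gt_atTop 0)
    rcases this.exists with ⟨R, h1, h2⟩
    exact ⟨R, h2, h1⟩
  obtain ⟨L, hL0, hLf⟩ : ∃ L : ℝ, L < 0 ∧ 0 < f L := by
    have := (hbot.eventually (eventually_gt_atTop 0)).and (eventually_lt_atBot 0)
    rcases this.exists with ⟨L, h1, h2⟩
    exact ⟨L, h2, h1⟩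
  have hpos : (0:ℝ) ∈ f '' Set.Ioo 0 R := by
    apply intermediate_value_Ioo hR0.le hcont.continuousOn
    exact ⟨hf0, hRf⟩
  have hneg : (0:ℝ) ∈ f '' Set.Ioo L 0 := by
    apply intermediate_value_Ioo' hL0.le hcont.continuousOn
    exact ⟨hf0, hLf⟩
  obtain ⟨l₄, hl₄, hfl₄⟩ := hpos
  obtain ⟨l₃, hl₃, hfl₃⟩ := hneg
  exact ⟨l₃, l₄, hl₃.2, hl₄.1, hfl₃, hfl₄⟩
end

section
/- For the critical exponent Q = Q₂ = (N(p-1) + p + pa)/(N-p), the line X/p' + Z/(Q₂+1) - (N-p)/p = 0 (where p' = p/(p-1)) is invariant under the flow of the system X_t = X[X - (N-p)/(p-1) + Z/(p-1)], Z_t = Z[N+a - Q₂X - Z]; i.e., if L(X,Z) = X/p' + Z/(Q₂+1) - (N-p)/p, then the derivative of L along the vector field vanishes whenever L(X,Z) = 0. -/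
/-- in the critical case Q = Q₂ = (N(p-1)+p+pa)/(N-p), the line
L(X,Z) = X/p' + Z/(Q₂+1) - (N-p)/p = 0 is invariant under the flow of the
scalar system: the derivative of L along the vector field vanishes on the
line. -/
theorem critical_invariant_line
    (N p a Q₂ : ℝ)
    (hp : 1 < p) (hpN : p < N) (hpa : 0 < p + a)
    (hQ₂ : Q₂ = (N * (p - 1) + p + p * a) / (N - p)) :
    ∀ X Z : ℝ,
      X / (p / (p - 1)) + Z / (Q₂ + 1) - (N - p) / p = 0 →
      (X * (X - (N - p) / (p - 1) + Z / (p - 1))) / (p / (p - 1))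
        + (Z * (N + a - Q₂ * X - Z)) / (Q₂ + 1) = 0 := by
  intro X Z h
  have hNp : N - p ≠ 0 := by linarith
  have hp0 : p ≠ 0 := by linarith
  have hp1 : p - 1 ≠ 0 := by linarith
  have hNa : (0:ℝ) < N + a := by linarith
  have hQ1 : Q₂ + 1 = p * (N + a) / (N - p) := by
    rw [hQ₂]; field_simp; ring
  have hQ1ne : Q₂ + 1 ≠ 0 := by
    rw [hQ1]; exact div_ne_zero (by positivity) hNp
  have key : (X * (X - (N - p) / (p - 1) + Z / (p - 1))) / (p / (p - 1))
        + (Z * (N + a - Q₂ * X - Z)) / (Q₂ + 1)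
      = (X - Z) * (X / (p / (p - 1)) + Z / (Q₂ + 1) - (N - p) / p) := by
    rw [hQ1, hQ₂]
    field_simp
    ring
  rw [key, h, mul_zero]
end

section
/- Let (X,Y,Z,W) be a solution of the quadratic system in the open region X,Y,Z,W > 0, defined on all of ℝ. Then the trajectory remains in the box (0,(N-p)/(p-1)) × (0,(N-q)/(q-1)) × (0,N+a) × (0,N+b) for all t ∈ ℝ. (Key steps: if X(t₀) = (N-p)/(p-1) at some t₀, then X satisfies X_t ≥ X[X - (N-p)/(p-1)] afterwards and blows up in finite time, contradicting global existence; analogously if Z(t₀) = N+a then for t < t₀, Z > N+a and Z_t ≤ Z(N+a-Z), forcing backward blow-up.) -/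
open Set Filter

/-- Key lemma: if `f` is positive, globally defined, and satisfies
`f' = f * (f - K + g)` with `g > 0` and `K > 0`, then `f < K` everywhere. -/
lemma key_blowup_lemma (K : ℝ) (hK : 0 < K) (f g : ℝ → ℝ)
    (hf : ∀ t, 0 < f t) (hg : ∀ t, 0 < g t)
    (hd : ∀ t, HasDerivAt f (f t * (f t - K + g t)) t) :
    ∀ t, f t < K := by
  by_contra h
  push_neg at h
  obtain ⟨t₀, ht₀⟩ := h
  have hcont : Continuous f := continuous_iff_continuousAt.2 fun t => (hd t).continuousAt
  -- Step 1: forward invariance of {f ≥ K}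
  have step1 : ∀ t, t₀ ≤ t → K ≤ f t := by
    intro t₂ ht₂
    by_contra hlt
    push_neg at hlt
    have ht₂' : t₀ < t₂ := lt_of_le_of_ne ht₂ (by rintro rfl; exact absurd ht₀ (not_le.2 hlt))
    set A : Set ℝ := Icc t₀ t₂ ∩ f ⁻¹' (Ici K) with hA
    have hclosed : IsClosed A := isClosed_Icc.inter (isClosed_Ici.preimage hcont)
    have hne : A.Nonempty := ⟨t₀, ⟨le_refl _, ht₂'.le⟩, ht₀⟩
    have hbdd : BddAbove A := ⟨t₂, fun x hx => hx.1.2⟩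
    obtain ⟨S, hSA, hSmax⟩ : ∃ S, S ∈ A ∧ ∀ x ∈ A, x ≤ S :=
      ⟨sSup A, hclosed.csSup_mem hne hbdd, fun x hx => le_csSup hbdd hx⟩
    have hfS : K ≤ f S := hSA.2
    have hSlt : S < t₂ := lt_of_le_of_ne hSA.1.2 (by
      rintro rfl; exact absurd hfS (not_le.2 hlt))
    have hpos : 0 < f S * (f S - K + g S) :=
      mul_pos (hf S) (by have := hg S; linarith)
    have hslope : ∀ᶠ t in nhdsWithin S {S}ᶜ, 0 < slope f S t :=
      (hasDerivAt_iff_tendsto_slope.1 (hd S)).eventually (eventually_gt_nhds hpos)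
    have hslope' : ∀ᶠ t in nhdsWithin S (Ioi S), 0 < slope f S t :=
      hslope.filter_mono (nhdsWithin_mono S (fun x hx => ne_of_gt hx))
    have hmem : Ioc S t₂ ∈ nhdsWithin S (Ioi S) := Ioc_mem_nhdsGT_of_mem ⟨le_refl S, hSlt⟩
    obtain ⟨t, htslope, htmem⟩ := (hslope'.and (eventually_of_mem hmem (fun x hx => hx))).exists
    have htS : S < t := htmem.1
    have hft : f S < f t := by
      have := htslope
      rw [slope_def_field] at this
      have hpos' : 0 < t - S := sub_pos.2 htS
      have h4 := mul_pos this hpos'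
      rw [div_mul_cancel₀ _ hpos'.ne'] at h4
      linarith
    have htA : t ∈ A := ⟨⟨le_trans hSA.1.1 htS.le, htmem.2⟩, le_of_lt (lt_of_le_of_lt hfS hft)⟩
    exact absurd (hSmax t htA) (not_le.2 htS)
  -- Step 2: strict monotonicity on [t₀, ∞)
  have hmono : StrictMonoOn f (Ici t₀) := by
    apply strictMonoOn_of_deriv_pos (convex_Ici t₀) hcont.continuousOn
    intro x hx
    rw [interior_Ici] at hx
    rw [(hd x).deriv]
    exact mul_pos (hf x) (by have := hg x; have := step1 x (le_of_lt hx); linarith)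
  set c := f (t₀ + 1) with hc
  have hcK : K < c :=
    lt_of_le_of_lt ht₀ (hmono (self_mem_Ici) (by simp) (by linarith))
  have hc0 : 0 < c := hK.trans hcK
  set ε := 1 - K / c with hε
  clear_value ε
  have hεpos : 0 < ε := by
    have : K / c < 1 := (div_lt_one hc0).2 hcK
    have hcc : K / c < 1 := (div_lt_one hc0).2 hcK
    rw [hε]; linarith
  set v : ℝ → ℝ := fun t => (f t)⁻¹ + ε * t with hv
  have hdv : ∀ t, HasDerivAt v (-(f t * (f t - K + g t)) / (f t) ^ 2 + ε) t := by
    intro t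
    have h1 : HasDerivAt (fun y => (f y)⁻¹) (-(f t * (f t - K + g t)) / (f t) ^ 2) t :=
      (hd t).inv (hf t).ne'
    have h2 : HasDerivAt (fun y => ε * y) (ε * 1) t := (hasDerivAt_id t).const_mul ε
    have h3 := h1.add h2; rw [mul_one] at h3; exact h3
  have hfc : ∀ x, t₀ + 1 ≤ x → c ≤ f x := by
    intro x hx
    rcases eq_or_lt_of_le hx with rfl | hx'
    · exact le_refl _
    · exact le_of_lt (hmono (by simp) (by simp; linarith [hx]) hx')
  -- v is antitone on [t₀+1, ∞)
  have hanti : AntitoneOn v (Ici (t₀ + 1)) := by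
    apply antitoneOn_of_deriv_nonpos (convex_Ici _)
    · exact Continuous.continuousOn (by
        exact ((hcont.inv₀ (fun t => (hf t).ne')).add (continuous_const.mul continuous_id)))
    · intro x _; exact (hdv x).differentiableAt.differentiableWithinAt
    · intro x hx
      rw [interior_Ici] at hx
      rw [(hdv x).deriv]
      have hfx : c ≤ f x := hfc x (le_of_lt hx)
      have hfx0 : 0 < f x := hf x
      have hgx : 0 < g x := hg x
      have heq : f x * (f x - K + g x) / (f x) ^ 2 = (f x - K + g x) / f x := by
        rw [sq, mul_div_mul_left _ _ hfx0.ne']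
      have key : ε ≤ (f x - K + g x) / f x := by
        rw [le_div_iff₀ hfx0]
        have h1 : K / c * c = K := by field_simp
        have h2 : K / c * c ≤ K / c * f x :=
          mul_le_mul_of_nonneg_left hfx (le_of_lt (div_pos hK hc0))
        have h3 : ε * f x = f x - K / c * f x := by rw [hε]; ring
        linarith
      rw [neg_div]
      linarith [heq ▸ key]
  -- contradiction: v is eventually larger than v (t₀ + 1)
  set T := t₀ + 1 + ((f (t₀ + 1))⁻¹ + 1) / ε with hT
  clear_value T
  have hTge : t₀ + 1 ≤ T := by
    have h5 : 0 < ((f (t₀ + 1))⁻¹ + 1) / ε :=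
      div_pos (by positivity) hεpos
    rw [hT]; linarith
  have h1 : v T ≤ v (t₀ + 1) := hanti (by simp) (by simpa using hTge) hTge
  have h2 : v (t₀ + 1) < v T := by
    have hvT : v T = (f T)⁻¹ + ε * T := rfl
    have hεT : ε * T = ε * (t₀ + 1) + ((f (t₀ + 1))⁻¹ + 1) := by
      rw [hT]; field_simp
    have hfT : 0 < (f T)⁻¹ := inv_pos.2 (hf T)
    have : v (t₀ + 1) = (f (t₀ + 1))⁻¹ + ε * (t₀ + 1) := rfl
    rw [this, hvT, hεT]
    linarith
  exact absurd h1 (not_le.2 h2)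

/-- a globally defined solution of the quadratic system in the
open region X,Y,Z,W > 0 stays in the box
(0,(N-p)/(p-1)) × (0,(N-q)/(q-1)) × (0,N+a) × (0,N+b). -/
theorem trajectory_stays_in_box
    (N p q a b s m δ μ : ℝ)
    (hp : 1 < p) (hpN : p < N) (hq : 1 < q) (hqN : q < N)
    (hpa : 0 < p + a) (hqb : 0 < q + b)
    (hs : 0 ≤ s) (hm : 0 ≤ m) (hδ : 0 < δ) (hμ : 0 < μ)
    (X Y Z W : ℝ → ℝ)
    (hpos : ∀ t, 0 < X t ∧ 0 < Y t ∧ 0 < Z t ∧ 0 < W t)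
    (hX : ∀ t, HasDerivAt X (X t * (X t - (N - p) / (p - 1) + Z t / (p - 1))) t)
    (hY : ∀ t, HasDerivAt Y (Y t * (Y t - (N - q) / (q - 1) + W t / (q - 1))) t)
    (hZ : ∀ t, HasDerivAt Z (Z t * (N + a - s * X t - δ * Y t - Z t)) t)
    (hW : ∀ t, HasDerivAt W (W t * (N + b - μ * X t - m * Y t - W t)) t) :
    ∀ t : ℝ, X t < (N - p) / (p - 1) ∧ Y t < (N - q) / (q - 1) ∧
      Z t < N + a ∧ W t < N + b := by
  have hXbox : ∀ t, X t < (N - p) / (p - 1) := by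
    apply key_blowup_lemma _ (div_pos (by linarith) (by linarith)) X (fun t => Z t / (p - 1))
      (fun t => (hpos t).1) (fun t => div_pos (hpos t).2.2.1 (by linarith)) hX
  have hYbox : ∀ t, Y t < (N - q) / (q - 1) := by
    apply key_blowup_lemma _ (div_pos (by linarith) (by linarith)) Y (fun t => W t / (q - 1))
      (fun t => (hpos t).2.1) (fun t => div_pos (hpos t).2.2.2 (by linarith)) hY
  have hZbox : ∀ t, Z (-t) < N + a := by
    apply key_blowup_lemma _ (by linarith) (fun t => Z (-t))
      (fun t => s * X (-t) + δ * Y (-t)) (fun t => (hpos (-t)).2.2.1)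
      (fun t => by
        show (0:ℝ) < s * X (-t) + δ * Y (-t)
        have h1 : 0 ≤ s * X (-t) := mul_nonneg hs (hpos (-t)).1.le
        have h2 : 0 < δ * Y (-t) := mul_pos hδ (hpos (-t)).2.1
        linarith)
    intro t
    have hcomp := (hZ (-t)).comp t (hasDerivAt_neg t)
    exact hcomp.congr_deriv (by ring)
  have hWbox : ∀ t, W (-t) < N + b := by
    apply key_blowup_lemma _ (by linarith) (fun t => W (-t))
      (fun t => μ * X (-t) + m * Y (-t)) (fun t => (hpos (-t)).2.2.2)
      (fun t => by
        show (0:ℝ) < μ * X (-t) + m * Y (-t)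
        have h1 : 0 < μ * X (-t) := mul_pos hμ (hpos (-t)).1
        have h2 : 0 ≤ m * Y (-t) := mul_nonneg hm (hpos (-t)).2.1.le
        linarith)
    intro t
    have hcomp := (hW (-t)).comp t (hasDerivAt_neg t)
    exact hcomp.congr_deriv (by ring)
  intro t
  refine ⟨hXbox t, hYbox t, ?_, ?_⟩
  · have := hZbox (-t); rwa [neg_neg] at this
  · have := hWbox (-t); rwa [neg_neg] at this
end

section
/- Assume s ≥ (N(p-1) + p + pa)/(N-p). Let (u,v) be a positive radial solution of -Δ_p u = r^a u^s v^δ, -Δ_q v = r^b u^μ v^m with u, v regular at 0. Then the function F(r) = r^N[|u'|^p/p' + r^a u^{s+1} v^δ/(s+1) + ((N-p)/p) u|u'|^{p-2}u'/r] satisfies F(0) = 0 and F'(r) = r^{N-1+a} v^δ u^{s+1}[(N+a)/(s+1) - (N-p)/p - δY/(s+1)] where Y = -rv'/v; in particular F is nonincreasing wherever v is nonincreasing. -/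
open Real Set

set_option maxHeartbeats 1000000 in
/-- assume s ≥ (N(p-1)+p+pa)/(N-p).  For a positive radial
solution with u', v' < 0, the Pohozaev-type function
F(r) = r^N[|u'|^p/p' + r^a u^{s+1}v^δ/(s+1) + ((N-p)/p)u|u'|^{p-2}u'/r]
satisfies F(0) = 0 and
F'(r) = r^{N-1+a} v^δ u^{s+1}[(N+a)/(s+1) - (N-p)/p - δY/(s+1)], Y = -rv'/v;
in particular F' ≤ 0 since v is nonincreasing. -/
theorem pohozaev_F_monotone
    (N p a δ s : ℝ) (R : ℝ)
    (hp : 1 < p) (hpN : p < N) (hpa : 0 < p + a) (hδ : 0 < δ)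
    (hscrit : (N * (p - 1) + p + p * a) / (N - p) ≤ s)
    (u v u' v' : ℝ → ℝ)
    (hu : ∀ r ∈ Set.Ioo (0:ℝ) R, HasDerivAt u (u' r) r)
    (hv : ∀ r ∈ Set.Ioo (0:ℝ) R, HasDerivAt v (v' r) r)
    (hupos : ∀ r ∈ Set.Ioo (0:ℝ) R, 0 < u r)
    (hvpos : ∀ r ∈ Set.Ioo (0:ℝ) R, 0 < v r)
    (hu'neg : ∀ r ∈ Set.Ioo (0:ℝ) R, u' r < 0)
    (hv'neg : ∀ r ∈ Set.Ioo (0:ℝ) R, v' r < 0)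
    (hpde : ∀ r ∈ Set.Ioo (0:ℝ) R,
      HasDerivAt (fun ρ => ρ ^ (N - 1) * |u' ρ| ^ (p - 2) * u' ρ)
        (-(r ^ (N - 1 + a) * u r ^ s * v r ^ δ)) r)
    (F : ℝ → ℝ)
    (hF : ∀ r, F r = r ^ N * (|u' r| ^ p / (p / (p - 1))
        + r ^ a * u r ^ (s + 1) * v r ^ δ / (s + 1)
        + (N - p) / p * u r * |u' r| ^ (p - 2) * u' r / r)) :
    F 0 = 0 ∧
    ∀ r ∈ Set.Ioo (0:ℝ) R,
      HasDerivAt F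
        (r ^ (N - 1 + a) * v r ^ δ * u r ^ (s + 1) *
          ((N + a) / (s + 1) - (N - p) / p - δ * (-(r * v' r) / v r) / (s + 1))) r ∧
      r ^ (N - 1 + a) * v r ^ δ * u r ^ (s + 1) *
          ((N + a) / (s + 1) - (N - p) / p - δ * (-(r * v' r) / v r) / (s + 1)) ≤ 0 := by
  have hp0 : (0:ℝ) < p := lt_trans one_pos hp
  have hp1 : (0:ℝ) < p - 1 := by linarith
  have hN1 : (1:ℝ) < N := lt_trans hp hpN
  have hNp : (0:ℝ) < N - p := by linarith
  have hnum : (0:ℝ) < N * (p - 1) + p + p * a := by nlinarith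
  have hs0 : (0:ℝ) < s := lt_of_lt_of_le (div_pos hnum hNp) hscrit
  have hs1 : (0:ℝ) < s + 1 := by linarith
  set q : ℝ := p / (p - 1) with hqdef
  have hq0 : (0:ℝ) < q := hqdef ▸ div_pos hp0 hp1
  set K : ℝ := N - (N - 1) * q with hKdef
  set G : ℝ → ℝ := fun ρ => ρ ^ (N - 1) * |u' ρ| ^ (p - 2) * u' ρ with hGdef
  clear_value q K G
  -- generic facts about G on the interval
  have hGfact : ∀ ρ ∈ Set.Ioo (0:ℝ) R,
      G ρ = -(ρ ^ (N - 1) * |u' ρ| ^ (p - 1)) ∧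
      (-(G ρ)) ^ q = ρ ^ ((N - 1) * q) * |u' ρ| ^ p := by
    intro ρ hρ
    have hρ0 : (0:ℝ) < ρ := hρ.1
    have hAρ : 0 < |u' ρ| := abs_pos.mpr (ne_of_lt (hu'neg ρ hρ))
    have hG1 : G ρ = -(ρ ^ (N - 1) * |u' ρ| ^ (p - 1)) := by
      have h1 : |u' ρ| ^ (p - 2) * |u' ρ| = |u' ρ| ^ (p - 1) := by
        nth_rewrite 2 [← Real.rpow_one |u' ρ|]
        rw [← Real.rpow_add hAρ, show p - 2 + 1 = p - 1 from by ring]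
      have h2 : u' ρ = -|u' ρ| := by rw [abs_of_neg (hu'neg ρ hρ), neg_neg]
      rw [hGdef]
      simp only
      nth_rewrite 2 [h2]
      rw [← h1]
      ring
    refine ⟨hG1, ?_⟩
    rw [hG1, neg_neg, Real.mul_rpow (by positivity) (by positivity),
      ← Real.rpow_mul hρ0.le, ← Real.rpow_mul hAρ.le]
    rw [show (p - 1) * q = p from by rw [hqdef]; field_simp]
  constructor
  · rw [hF 0, Real.zero_rpow (by linarith : N ≠ 0), zero_mul]
  intro r hr
  obtain ⟨hr0, hrR⟩ := hr
  have hrIoo : r ∈ Set.Ioo (0:ℝ) R := ⟨hr0, hrR⟩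
  have hU : 0 < u r := hupos r hrIoo
  have hV : 0 < v r := hvpos r hrIoo
  have hu'r : u' r < 0 := hu'neg r hrIoo
  have hv'r : v' r < 0 := hv'neg r hrIoo
  set A : ℝ := |u' r| with hAdef
  have hA : 0 < A := abs_pos.mpr (ne_of_lt hu'r)
  have hu'A : u' r = -A := by rw [hAdef, abs_of_neg hu'r, neg_neg]
  -- the bracket is nonpositive
  have hbr : (N + a) / (s + 1) - (N - p) / p - δ * (-(r * v' r) / v r) / (s + 1) ≤ 0 := by
    have hY : 0 < -(r * v' r) / v r := by
      apply div_pos _ hV; nlinarith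
    have hb1 : (N + a) / (s + 1) ≤ (N - p) / p := by
      rw [div_le_div_iff₀ hs1 hp0]
      have := (div_le_iff₀ hNp).mp hscrit
      nlinarith
    have h3 : 0 ≤ δ * (-(r * v' r) / v r) / (s + 1) := by positivity
    linarith
  have hpref : 0 ≤ r ^ (N - 1 + a) * v r ^ δ * u r ^ (s + 1) := by positivity
  refine ⟨?_, mul_nonpos_of_nonneg_of_nonpos hpref hbr⟩
  -- key algebraic facts at r
  obtain ⟨hGr, hq2⟩ := hGfact r hrIoo
  rw [← hAdef] at hGr hq2
  have hq1 : (-(G r)) ^ (q - 1) = r ^ ((N - 1) * (q - 1)) * A := by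
    rw [hGr, neg_neg, Real.mul_rpow (by positivity) (by positivity),
      ← Real.rpow_mul hr0.le, ← Real.rpow_mul hA.le]
    rw [show (p - 1) * (q - 1) = 1 from by rw [hqdef]; field_simp; ring, Real.rpow_one]
  have key1 : r ^ ((N - 1) * (q - 1)) * r ^ K = r := by
    rw [← Real.rpow_add hr0, show (N - 1) * (q - 1) + K = 1 by rw [hKdef]; ring,
      Real.rpow_one]
  have key2 : r ^ ((N - 1) * q) * r ^ (K - 1) = r ^ (N - 1) := by
    rw [← Real.rpow_add hr0, show (N - 1) * q + (K - 1) = N - 1 from by rw [hKdef]; ring]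
  have keyK : K * p = -(N - p) * q := by
    rw [hKdef, hqdef]
    field_simp
    ring
  have keyA : A * A ^ (p - 1) = A ^ p := by
    nth_rewrite 1 [← Real.rpow_one A]
    rw [← Real.rpow_add hA, show 1 + (p - 1) = p from by ring]
  have keyu : u r * u r ^ s = u r ^ (s + 1) := by
    nth_rewrite 1 [← Real.rpow_one (u r)]
    rw [← Real.rpow_add hU, show 1 + s = s + 1 from by ring]
  have keyv : v r ^ (δ - 1) * v r = v r ^ δ := by
    nth_rewrite 2 [← Real.rpow_one (v r)]
    rw [← Real.rpow_add hV, show δ - 1 + 1 = δ from by ring]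
  have keyr : r ^ (N - 1 + a) * r = r ^ (N + a) := by
    nth_rewrite 2 [← Real.rpow_one r]
    rw [← Real.rpow_add hr0, show N - 1 + a + 1 = N + a from by ring]
  have keyr2 : r ^ (N + a - 1) = r ^ (N - 1 + a) := by
    congr 1; ring
  -- derivatives of the three summands
  have hGpos : 0 < -(G r) := by rw [hGr, neg_neg]; positivity
  have hnegG : HasDerivAt (fun ρ => -(G ρ)) (r ^ (N - 1 + a) * u r ^ s * v r ^ δ) r := by
    have := (hpde r hrIoo).neg
    rw [neg_neg] at this
    exact this
  have h1 : HasDerivAt (fun ρ => 1 / q * ((-(G ρ)) ^ q * ρ ^ K))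
      (r ^ (N - 1 + a) * u r ^ s * v r ^ δ * A * r - (N - p) / p * (A ^ p * r ^ (N - 1))) r := by
    have hraw := HasDerivAt.const_mul (1 / q)
      ((hnegG.rpow_const (p := q) (Or.inl (ne_of_gt hGpos))).mul
        (Real.hasDerivAt_rpow_const (p := K) (Or.inl hr0.ne')))
    refine hraw.congr_deriv (Eq.symm ?_)
    rw [hq1, hq2]
    field_simp
    linear_combination
      (-(p * q * (r ^ (N - 1 + a) * u r ^ s * v r ^ δ * A))) * key1
      + (-(p * K * A ^ p)) * key2
      + (-(A ^ p * r ^ (N - 1))) * keyK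
  have h2 : HasDerivAt (fun ρ => (N - p) / p * (u ρ * G ρ))
      ((N - p) / p * (A ^ p * r ^ (N - 1))
        - (N - p) / p * (u r * (r ^ (N - 1 + a) * u r ^ s * v r ^ δ))) r := by
    have hraw := HasDerivAt.const_mul ((N - p) / p) ((hu r hrIoo).mul (hpde r hrIoo))
    refine hraw.congr_deriv (Eq.symm ?_)
    rw [hGr, hu'A]
    linear_combination (-((N - p) / p * r ^ (N - 1))) * keyA
  have hus : HasDerivAt (fun ρ => u ρ ^ (s + 1)) (u' r * (s + 1) * u r ^ s) r := by
    have := (hu r hrIoo).rpow_const (p := s + 1) (Or.inl hU.ne')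
    rwa [show s + 1 - 1 = s by ring] at this
  have hvd : HasDerivAt (fun ρ => v ρ ^ δ) (v' r * δ * v r ^ (δ - 1)) r :=
    (hv r hrIoo).rpow_const (Or.inl hV.ne')
  have h3 : HasDerivAt (fun ρ => ρ ^ (N + a) * (u ρ ^ (s + 1) * v ρ ^ δ) / (s + 1))
      ((N + a) / (s + 1) * (r ^ (N - 1 + a) * (u r ^ (s + 1) * v r ^ δ))
        - r ^ (N - 1 + a) * u r ^ s * v r ^ δ * A * r
        + δ / (s + 1) * (r ^ (N - 1 + a) * r * (u r ^ (s + 1) * v r ^ (δ - 1)) * v' r)) r := by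
    have hraw := ((Real.hasDerivAt_rpow_const (p := N + a) (Or.inl hr0.ne')).mul
      (hus.mul hvd)).div_const (s + 1)
    refine hraw.congr_deriv (Eq.symm ?_)
    simp only [Pi.mul_apply]
    rw [keyr2, hu'A, ← keyr]
    field_simp
    ring
  have htot := (h1.add h2).add h3
  have hev : F =ᶠ[nhds r] (fun ρ => 1 / q * ((-(G ρ)) ^ q * ρ ^ K)
      + (N - p) / p * (u ρ * G ρ) + ρ ^ (N + a) * (u ρ ^ (s + 1) * v ρ ^ δ) / (s + 1)) := by
    filter_upwards [isOpen_Ioo.mem_nhds hrIoo] with ρ hρ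
    have hρ0 : (0:ℝ) < ρ := hρ.1
    obtain ⟨hG1, hG2⟩ := hGfact ρ hρ
    have ePQ : ρ ^ ((N - 1) * q) * ρ ^ K = ρ ^ N := by
      rw [← Real.rpow_add hρ0, show (N - 1) * q + K = N from by rw [hKdef]; ring]
    have eY : ρ ^ N = ρ ^ (N - 1) * ρ := by
      nth_rewrite 3 [← Real.rpow_one ρ]
      rw [← Real.rpow_add hρ0, show N - 1 + 1 = N from by ring]
    have e3 : ρ ^ N * ρ ^ a = ρ ^ (N + a) := by
      rw [← Real.rpow_add hρ0]
    have t1 : ρ ^ N * (|u' ρ| ^ p / q) = 1 / q * ((-(G ρ)) ^ q * ρ ^ K) := by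
      rw [hG2, ← ePQ]; ring
    have t2 : ρ ^ N * ((N - p) / p * u ρ * |u' ρ| ^ (p - 2) * u' ρ / ρ)
        = (N - p) / p * (u ρ * G ρ) := by
      rw [hGdef]
      simp only
      rw [eY]
      field_simp
    have t3 : ρ ^ N * (ρ ^ a * u ρ ^ (s + 1) * v ρ ^ δ / (s + 1))
        = ρ ^ (N + a) * (u ρ ^ (s + 1) * v ρ ^ δ) / (s + 1) := by
      rw [← e3]; ring
    rw [hF ρ, mul_add, mul_add, t1, t2, t3]
    ring
  refine HasDerivAt.congr_of_eventuallyEq ?_ hev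
  refine htot.congr_deriv (Eq.symm ?_)
  rw [← keyv, ← keyu]
  field_simp
  ring
end

section
/- For the Hamiltonian system -Δu = r^a v^δ, -Δv = r^b u^μ (p = q = 2 < N, δμ > 1), the Pohozaev function E_H(r) = r^N[u'v' + r^b u^{μ+1}/(μ+1) + r^a v^{δ+1}/(δ+1) + ((N+a)/(δ+1)) v u'/r + ((N+b)/(μ+1)) u v'/r] satisfies E_H'(r) = r^{N-1} u' v' ((N+a)/(δ+1) + (N+b)/(μ+1) - (N-2)). In particular E_H is constant along radial solutions if and only if (N+a)/(δ+1) + (N+b)/(μ+1) = N-2 (unless u'v' vanishes identically). -/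
/-- for the Hamiltonian system -Δu = r^a v^δ, -Δv = r^b u^μ,
the Pohozaev function E_H satisfies
E_H'(r) = r^{N-1}u'v'((N+a)/(δ+1) + (N+b)/(μ+1) - (N-2)); in particular
E_H is constant along radial solutions (with u'v' not identically zero)
iff (N+a)/(δ+1) + (N+b)/(μ+1) = N-2. -/
theorem hamiltonian_pohozaev
    (N a b δ μ : ℝ) (R₁ R₂ : ℝ)
    (hN : 2 < N) (ha : -2 < a) (hb : -2 < b)
    (hδ : 0 < δ) (hμ : 0 < μ) (hδμ : 1 < δ * μ)
    (hR₁ : 0 < R₁) (hR : R₁ < R₂)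
    (u v u' v' : ℝ → ℝ)
    (hu : ∀ r ∈ Set.Ioo R₁ R₂, HasDerivAt u (u' r) r)
    (hv : ∀ r ∈ Set.Ioo R₁ R₂, HasDerivAt v (v' r) r)
    (hupos : ∀ r ∈ Set.Ioo R₁ R₂, 0 < u r)
    (hvpos : ∀ r ∈ Set.Ioo R₁ R₂, 0 < v r)
    (hpde1 : ∀ r ∈ Set.Ioo R₁ R₂,
      HasDerivAt (fun ρ => ρ ^ (N - 1) * u' ρ) (-(r ^ (N - 1 + a) * v r ^ δ)) r)
    (hpde2 : ∀ r ∈ Set.Ioo R₁ R₂,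
      HasDerivAt (fun ρ => ρ ^ (N - 1) * v' ρ) (-(r ^ (N - 1 + b) * u r ^ μ)) r)
    (E : ℝ → ℝ)
    (hE : ∀ r, E r = r ^ N * (u' r * v' r + r ^ b * u r ^ (μ + 1) / (μ + 1)
        + r ^ a * v r ^ (δ + 1) / (δ + 1)
        + (N + a) / (δ + 1) * v r * u' r / r
        + (N + b) / (μ + 1) * u r * v' r / r)) :
    (∀ r ∈ Set.Ioo R₁ R₂,
      HasDerivAt E
        (r ^ (N - 1) * u' r * v' r * ((N + a) / (δ + 1) + (N + b) / (μ + 1) - (N - 2))) r) ∧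
    ((∃ r ∈ Set.Ioo R₁ R₂, u' r * v' r ≠ 0) →
      ((∀ r₁ ∈ Set.Ioo R₁ R₂, ∀ r₂ ∈ Set.Ioo R₁ R₂, E r₁ = E r₂) ↔
        (N + a) / (δ + 1) + (N + b) / (μ + 1) = N - 2)) := by
  have hδ1 : (0:ℝ) < δ + 1 := by linarith
  have hμ1 : (0:ℝ) < μ + 1 := by linarith
  have main : ∀ r ∈ Set.Ioo R₁ R₂,
      HasDerivAt E
        (r ^ (N - 1) * u' r * v' r * ((N + a) / (δ + 1) + (N + b) / (μ + 1) - (N - 2))) r := by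
    intro r hr
    have hr0 : 0 < r := lt_trans hR₁ hr.1
    have hu0 : 0 < u r := hupos r hr
    have hv0 : 0 < v r := hvpos r hr
    have hW := hpde1 r hr
    have hZ := hpde2 r hr
    have hu' := hu r hr
    have hv' := hv r hr
    have hp1 : HasDerivAt (fun ρ : ℝ => ρ ^ (2 - N)) ((2 - N) * r ^ (2 - N - 1)) r :=
      Real.hasDerivAt_rpow_const (Or.inl hr0.ne')
    have hpb : HasDerivAt (fun ρ : ℝ => ρ ^ (N + b)) ((N + b) * r ^ (N + b - 1)) r :=
      Real.hasDerivAt_rpow_const (Or.inl hr0.ne')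
    have hpa : HasDerivAt (fun ρ : ℝ => ρ ^ (N + a)) ((N + a) * r ^ (N + a - 1)) r :=
      Real.hasDerivAt_rpow_const (Or.inl hr0.ne')
    have huμ : HasDerivAt (fun ρ => u ρ ^ (μ + 1)) (u' r * (μ + 1) * u r ^ (μ + 1 - 1)) r :=
      hu'.rpow_const (Or.inl hu0.ne')
    have hvδ : HasDerivAt (fun ρ => v ρ ^ (δ + 1)) (v' r * (δ + 1) * v r ^ (δ + 1 - 1)) r :=
      hv'.rpow_const (Or.inl hv0.ne')
    have hF := (((((hp1.mul hW).mul hZ).add ((hpb.mul huμ).div_const (μ + 1))).add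
      ((hpa.mul hvδ).div_const (δ + 1))).add ((hv'.mul hW).const_mul ((N + a) / (δ + 1)))).add
      ((hu'.mul hZ).const_mul ((N + b) / (μ + 1)))
    have hEq : E =ᶠ[nhds r]
        (fun ρ => ρ ^ (2 - N) * (ρ ^ (N - 1) * u' ρ) * (ρ ^ (N - 1) * v' ρ)
          + ρ ^ (N + b) * u ρ ^ (μ + 1) / (μ + 1)
          + ρ ^ (N + a) * v ρ ^ (δ + 1) / (δ + 1)
          + (N + a) / (δ + 1) * (v ρ * (ρ ^ (N - 1) * u' ρ))
          + (N + b) / (μ + 1) * (u ρ * (ρ ^ (N - 1) * v' ρ))) := by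
      filter_upwards [Ioi_mem_nhds hr0] with ρ hρ
      have hρ0 : (0:ℝ) < ρ := hρ
      have hρN : ρ ^ (N : ℝ) ≠ 0 := (Real.rpow_pos_of_pos hρ0 N).ne'
      rw [hE]
      simp only [Real.rpow_sub hρ0, Real.rpow_add hρ0, Real.rpow_one, Real.rpow_two]
      field_simp
    have hder := hF.congr_of_eventuallyEq hEq
    refine hder.congr_deriv (Eq.symm ?_)
    have hrN : r ^ (N : ℝ) ≠ 0 := (Real.rpow_pos_of_pos hr0 N).ne'
    simp only [Pi.mul_apply, add_sub_cancel_right, Real.rpow_sub hr0, Real.rpow_add hr0,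
      Real.rpow_add hu0, Real.rpow_add hv0, Real.rpow_one, Real.rpow_two]
    field_simp
    ring
  refine ⟨main, ?_⟩
  rintro ⟨r, hr, hne⟩
  constructor
  · intro hconst
    have h1 := main r hr
    have h2 : HasDerivAt E 0 r := by
      have heq : Set.EqOn E (fun _ => E r) (Set.Ioo R₁ R₂) := fun x hx => hconst x hx r hr
      exact (hasDerivAt_const r (E r)).congr_of_eventuallyEq
        (Filter.eventuallyEq_of_mem (isOpen_Ioo.mem_nhds hr) heq)
    have hz := h1.unique h2
    have hr0 : 0 < r := lt_trans hR₁ hr.1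
    have hfac : r ^ (N - 1) * u' r * v' r ≠ 0 := by
      have : r ^ (N - 1) ≠ 0 := (Real.rpow_pos_of_pos hr0 _).ne'
      rw [mul_assoc]
      exact mul_ne_zero this hne
    have := (mul_eq_zero.mp hz).resolve_left hfac
    linarith
  · intro hcond r₁ hr₁ r₂ hr₂
    have hz : ∀ x ∈ Set.Ioo R₁ R₂, HasDerivAt E 0 x := by
      intro x hx
      have := main x hx
      rwa [hcond, sub_self, mul_zero] at this
    have key : ∀ s t : ℝ, s ∈ Set.Ioo R₁ R₂ → t ∈ Set.Ioo R₁ R₂ → s ≤ t → E t = E s := by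
      intro s t hs ht hst
      have hsub : Set.Icc s t ⊆ Set.Ioo R₁ R₂ := fun x hx =>
        ⟨lt_of_lt_of_le hs.1 hx.1, lt_of_le_of_lt hx.2 ht.2⟩
      exact constant_of_has_deriv_right_zero
        (fun x hx => (hz x (hsub hx)).continuousAt.continuousWithinAt)
        (fun x hx => (hz x (hsub (Set.Ico_subset_Icc_self hx))).hasDerivWithinAt)
        t ⟨hst, le_refl t⟩
    rcases le_total r₁ r₂ with h | h
    · exact (key r₁ r₂ hr₁ hr₂ h).symm
    · exact key r₂ r₁ hr₂ hr₁ h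
end

section
/- In the critical Hamiltonian case (N+a)/(δ+1) + (N+b)/(μ+1) = N-2, with X = -ru'/u, Y = -rv'/v, Z = r^{1+a}v^δ/|u'|, W = r^{1+b}u^μ/|v'|, the Pohozaev function can be written E_H(r) = r^{N-2} u v [XY - Y(N+b-W)/(μ+1) - (N+a-Z)X/(δ+1)]. Consequently, if at some radius R a positive solution satisfies X(R) = Y(R) = N-2 with Z(R), W(R) > 0, then E_H(R) > 0. -/
set_option maxHeartbeats 2000000


/-- in the critical Hamiltonian case
(N+a)/(δ+1) + (N+b)/(μ+1) = N-2, with X = -ru'/u, Y = -rv'/v,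
Z = r^{1+a}v^δ/|u'|, W = r^{1+b}u^μ/|v'|, the Pohozaev function can be
written E_H(r) = r^{N-2}uv[XY - Y(N+b-W)/(μ+1) - (N+a-Z)X/(δ+1)];
consequently if X(R) = Y(R) = N-2 with Z(R), W(R) > 0 then E_H(R) > 0. -/
theorem hamiltonian_pohozaev_quadratic_form
    (N a b δ μ : ℝ) (R₁ R₂ : ℝ)
    (hN : 2 < N) (ha : -2 < a) (hb : -2 < b)
    (hδ : 0 < δ) (hμ : 0 < μ) (hδμ : 1 < δ * μ)
    (hcrit : (N + a) / (δ + 1) + (N + b) / (μ + 1) = N - 2)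
    (hR₁ : 0 < R₁) (hR : R₁ < R₂)
    (u v u' v' : ℝ → ℝ)
    (hupos : ∀ r ∈ Set.Ioo R₁ R₂, 0 < u r)
    (hvpos : ∀ r ∈ Set.Ioo R₁ R₂, 0 < v r)
    (hu'neg : ∀ r ∈ Set.Ioo R₁ R₂, u' r < 0)
    (hv'neg : ∀ r ∈ Set.Ioo R₁ R₂, v' r < 0)
    (E X Y Z W : ℝ → ℝ)
    (hE : ∀ r, E r = r ^ N * (u' r * v' r + r ^ b * u r ^ (μ + 1) / (μ + 1)
        + r ^ a * v r ^ (δ + 1) / (δ + 1)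
        + (N + a) / (δ + 1) * v r * u' r / r
        + (N + b) / (μ + 1) * u r * v' r / r))
    (hX : ∀ r, X r = -(r * u' r) / u r)
    (hY : ∀ r, Y r = -(r * v' r) / v r)
    (hZ : ∀ r, Z r = r ^ (1 + a) * v r ^ δ / |u' r|)
    (hW : ∀ r, W r = r ^ (1 + b) * u r ^ μ / |v' r|) :
    (∀ r ∈ Set.Ioo R₁ R₂,
      E r = r ^ (N - 2) * u r * v r *
        (X r * Y r - Y r * (N + b - W r) / (μ + 1) - (N + a - Z r) * X r / (δ + 1))) ∧
    (∀ R ∈ Set.Ioo R₁ R₂, X R = N - 2 → Y R = N - 2 → 0 < Z R → 0 < W R → 0 < E R) := by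
  have hm : (0:ℝ) < μ + 1 := by linarith
  have hd : (0:ℝ) < δ + 1 := by linarith
  have key : ∀ r ∈ Set.Ioo R₁ R₂,
      E r = r ^ (N - 2) * u r * v r *
        (X r * Y r - Y r * (N + b - W r) / (μ + 1) - (N + a - Z r) * X r / (δ + 1)) := by
    intro r hr
    have hrpos : 0 < r := hR₁.trans hr.1
    have hu := hupos r hr
    have hv := hvpos r hr
    have hu' := hu'neg r hr
    have hv' := hv'neg r hr
    have h1 : r ^ N = r ^ (N - 2) * r * r := by
      rw [← Real.rpow_add_one hrpos.ne' (N - 2), ← Real.rpow_add_one hrpos.ne']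
      ring_nf
    have h2 : r ^ (1 + b) = r * r ^ b := by
      rw [Real.rpow_add hrpos, Real.rpow_one]
    have h3 : r ^ (1 + a) = r * r ^ a := by
      rw [Real.rpow_add hrpos, Real.rpow_one]
    have h4 : u r ^ (μ + 1) = u r ^ μ * u r := Real.rpow_add_one hu.ne' μ
    have h5 : v r ^ (δ + 1) = v r ^ δ * v r := Real.rpow_add_one hv.ne' δ
    rw [hE, hX, hY, hZ, hW, abs_of_neg hu', abs_of_neg hv', h1, h2, h3, h4, h5]
    have hune := hu.ne'
    have hvne := hv.ne'
    have hu'ne := hu'.ne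
    have hv'ne := hv'.ne
    have hrne := hrpos.ne'
    set P := r ^ (N - 2)
    set A := r ^ a
    set B := r ^ b
    set Um := u r ^ μ
    set Vd := v r ^ δ
    simp only [div_neg]
    field_simp
    ring
  refine ⟨key, ?_⟩
  intro R hR' hXR hYR hZR hWR
  have hRpos : 0 < R := hR₁.trans hR'.1
  have hu := hupos R hR'
  have hv := hvpos R hR'
  have hrp : 0 < R ^ (N - 2) := Real.rpow_pos_of_pos hRpos _
  rw [key R hR', hXR, hYR]
  have hb1 : (N - 2) * (N - 2) - (N - 2) * (N + b - W R) / (μ + 1)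
      - (N + a - Z R) * (N - 2) / (δ + 1)
      = (N - 2) * (W R / (μ + 1) + Z R / (δ + 1)) := by
    linear_combination (-(N - 2)) * hcrit
  rw [hb1]
  have hpos : 0 < W R / (μ + 1) + Z R / (δ + 1) :=
    add_pos (div_pos hWR hm) (div_pos hZR hd)
  exact mul_pos (mul_pos (mul_pos hrp hu) hv) (mul_pos (by linarith) hpos)
end

section
/- For the system -Δu = u^s v^δ, -Δv = u^μ v^s (N > 2, s > 0), define Φ(r) = r^N[u'v' + u^{μ+1}v^s/(μ+1) + u^s v^{δ+1}/(δ+1) + (N/(δ+1)) v u'/r + (N/(μ+1)) u v'/r + (s/(2(δ+1))) v u'²/u + (s/(2(μ+1))) u v'²/v]. Then along positive radial solutions, Φ'(r) = -(s/2) r^{N-3} u v B(X,Y) where X = -ru'/u, Y = -rv'/v, and B(X,Y) = β X²(N-2-X) + α Y²(N-2-Y) + XY[βX + αY + (2/s)(N-2 - Nα - Nβ)] with α = 1/(μ+1), β = 1/(δ+1). -/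
set_option maxHeartbeats 1000000 in
/-- for the nonvariational system -Δu = u^s v^δ,
-Δv = u^μ v^s (N > 2, s > 0), the new energy Φ containing the terms in
X², Y² satisfies Φ'(r) = -(s/2) r^{N-3} u v B(X,Y), with
B(X,Y) = βX²(N-2-X) + αY²(N-2-Y) + XY[βX + αY + (2/s)(N-2-Nα-Nβ)],
α = 1/(μ+1), β = 1/(δ+1). -/
theorem phi_energy_derivative
    (N s δ μ α β : ℝ) (R₁ R₂ : ℝ)
    (hN : 2 < N) (hs : 0 < s) (hδ : 0 < δ) (hμ : 0 < μ)
    (hD : 0 < δ * μ - (1 - s) ^ 2)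
    (hα : α = 1 / (μ + 1)) (hβ : β = 1 / (δ + 1))
    (hR₁ : 0 < R₁) (hR : R₁ < R₂)
    (u v u' v' : ℝ → ℝ)
    (hu : ∀ r ∈ Set.Ioo R₁ R₂, HasDerivAt u (u' r) r)
    (hv : ∀ r ∈ Set.Ioo R₁ R₂, HasDerivAt v (v' r) r)
    (hupos : ∀ r ∈ Set.Ioo R₁ R₂, 0 < u r)
    (hvpos : ∀ r ∈ Set.Ioo R₁ R₂, 0 < v r)
    (hu'neg : ∀ r ∈ Set.Ioo R₁ R₂, u' r < 0)
    (hv'neg : ∀ r ∈ Set.Ioo R₁ R₂, v' r < 0)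
    (hpde1 : ∀ r ∈ Set.Ioo R₁ R₂,
      HasDerivAt (fun ρ => ρ ^ (N - 1) * u' ρ) (-(r ^ (N - 1) * u r ^ s * v r ^ δ)) r)
    (hpde2 : ∀ r ∈ Set.Ioo R₁ R₂,
      HasDerivAt (fun ρ => ρ ^ (N - 1) * v' ρ) (-(r ^ (N - 1) * u r ^ μ * v r ^ s)) r)
    (Φ X Y : ℝ → ℝ)
    (hΦ : ∀ r, Φ r = r ^ N * (u' r * v' r
        + u r ^ (μ + 1) * v r ^ s / (μ + 1)
        + u r ^ s * v r ^ (δ + 1) / (δ + 1)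
        + N / (δ + 1) * v r * u' r / r
        + N / (μ + 1) * u r * v' r / r
        + s / (2 * (δ + 1)) * v r * u' r ^ 2 / u r
        + s / (2 * (μ + 1)) * u r * v' r ^ 2 / v r))
    (hX : ∀ r, X r = -(r * u' r) / u r)
    (hY : ∀ r, Y r = -(r * v' r) / v r) :
    ∀ r ∈ Set.Ioo R₁ R₂,
      HasDerivAt Φ
        (-(s / 2) * r ^ (N - 3) * u r * v r *
          (β * X r ^ 2 * (N - 2 - X r) + α * Y r ^ 2 * (N - 2 - Y r)
            + X r * Y r * (β * X r + α * Y r + (2 / s) * (N - 2 - N * α - N * β)))) r := by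
  intro r hr
  have hr1 : 0 < r := hR₁.trans hr.1
  have hru : 0 < u r := hupos r hr
  have hrv : 0 < v r := hvpos r hr
  have hur := hu r hr
  have hvr := hv r hr
  have hApos : 0 < r ^ (N - 1) := Real.rpow_pos_of_pos hr1 _
  have hnear : ∀ᶠ ρ in nhds r, 0 < ρ := eventually_gt_nhds hr1
  have hinv : HasDerivAt (fun ρ : ℝ => ρ ^ (-(N - 1)))
      (-(N - 1) * r ^ (-(N - 1) - 1)) r :=
    Real.hasDerivAt_rpow_const (Or.inl hr1.ne')
  have key : ∀ w' : ℝ → ℝ, ∀ c : ℝ,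
      HasDerivAt (fun ρ => ρ ^ (N - 1) * w' ρ) (-(r ^ (N - 1) * c)) r →
      HasDerivAt w' (-c - (N - 1) * w' r / r) r := by
    intro w' c hpde
    have h2 := hinv.mul hpde
    have heq : w' =ᶠ[nhds r] fun ρ => ρ ^ (-(N - 1)) * (ρ ^ (N - 1) * w' ρ) := by
      filter_upwards [hnear] with ρ hρ
      rw [← mul_assoc, ← Real.rpow_add hρ]
      norm_num
    have h3 := h2.congr_of_eventuallyEq heq
    convert h3 using 1
    · rfl
    · rfl
    have e1 : r ^ (-(N - 1) - 1) = (r ^ (N - 1) * r)⁻¹ := by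
      rw [show -(N - 1) - 1 = -(N - 1 + 1) by ring, Real.rpow_neg hr1.le,
        Real.rpow_add hr1, Real.rpow_one]
    have e2 : r ^ (-(N - 1)) = (r ^ (N - 1))⁻¹ := by
      rw [Real.rpow_neg hr1.le]
    rw [e1, e2]
    field_simp
    ring
  have hu' : HasDerivAt u'
      (-(u r ^ s * v r ^ δ) - (N - 1) * u' r / r) r :=
    key u' (u r ^ s * v r ^ δ) (by rw [← mul_assoc]; exact hpde1 r hr)
  have hv' : HasDerivAt v'
      (-(u r ^ μ * v r ^ s) - (N - 1) * v' r / r) r :=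
    key v' (u r ^ μ * v r ^ s) (by rw [← mul_assoc]; exact hpde2 r hr)
  have hΦfun : Φ = fun ρ => ρ ^ N * (u' ρ * v' ρ
        + u ρ ^ (μ + 1) * v ρ ^ s / (μ + 1)
        + u ρ ^ s * v ρ ^ (δ + 1) / (δ + 1)
        + N / (δ + 1) * v ρ * u' ρ / ρ
        + N / (μ + 1) * u ρ * v' ρ / ρ
        + s / (2 * (δ + 1)) * v ρ * u' ρ ^ 2 / u ρ
        + s / (2 * (μ + 1)) * u ρ * v' ρ ^ 2 / v ρ) := funext hΦ
  rw [hΦfun]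
  have hrN : HasDerivAt (fun ρ : ℝ => ρ ^ N) (N * r ^ (N - 1)) r :=
    Real.hasDerivAt_rpow_const (Or.inl hr1.ne')
  have t1 := hu'.mul hv'
  have t2 := ((hur.rpow_const (p := μ + 1) (Or.inl hru.ne')).mul
    (hvr.rpow_const (p := s) (Or.inl hrv.ne'))).div_const (μ + 1)
  have t3 := ((hur.rpow_const (p := s) (Or.inl hru.ne')).mul
    (hvr.rpow_const (p := δ + 1) (Or.inl hrv.ne'))).div_const (δ + 1)
  have t4 := (((hasDerivAt_const r (N / (δ + 1))).mul hvr).mul hu').div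
    (hasDerivAt_id r) hr1.ne'
  have t5 := (((hasDerivAt_const r (N / (μ + 1))).mul hur).mul hv').div
    (hasDerivAt_id r) hr1.ne'
  have t6 := (((hasDerivAt_const r (s / (2 * (δ + 1)))).mul hvr).mul
    (hu'.pow 2)).div hur hru.ne'
  have t7 := (((hasDerivAt_const r (s / (2 * (μ + 1)))).mul hur).mul
    (hv'.pow 2)).div hvr hrv.ne'
  have H := hrN.mul ((((((t1.add t2).add t3).add t4).add t5).add t6).add t7)
  convert H using 1
  · rfl
  · rfl
  · rfl
  rw [hX, hY]
  have e1 : u r ^ (μ + 1) = u r ^ μ * u r := by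
    rw [Real.rpow_add hru, Real.rpow_one]
  have e2 : v r ^ (δ + 1) = v r ^ δ * v r := by
    rw [Real.rpow_add hrv, Real.rpow_one]
  have e3 : μ + 1 - 1 = μ := by ring
  have e4 : δ + 1 - 1 = δ := by ring
  have e5 : u r ^ (s - 1) = u r ^ s / u r := by
    rw [Real.rpow_sub hru, Real.rpow_one]
  have e6 : v r ^ (s - 1) = v r ^ s / v r := by
    rw [Real.rpow_sub hrv, Real.rpow_one]
  have e7 : r ^ N = r ^ (N - 1) * r := by
    have h := Real.rpow_add hr1 (N - 1) 1
    rw [Real.rpow_one] at h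
    rw [← h]; norm_num
  have e8 : r ^ (N - 3) = r ^ (N - 1) / r ^ (2:ℕ) := by
    rw [eq_div_iff (pow_ne_zero 2 hr1.ne'), ← Real.rpow_natCast r 2,
      ← Real.rpow_add hr1]
    ring_nf
  have hμ1 : μ + 1 ≠ 0 := by positivity
  have hδ1 : δ + 1 ≠ 0 := by positivity
  simp only [Pi.mul_apply, Pi.add_apply, Pi.div_apply, Pi.pow_apply]
  rw [e8, e3, e4, e1, e2, e5, e6, e7, hα, hβ]
  simp only [id_eq]
  set m := μ + 1 with hm
  set d := δ + 1 with hd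
  set A := r ^ (N - 1) with hA
  set U := u r ^ s with hU
  set V := v r ^ s with hV
  set P := u r ^ μ with hP
  set Q := v r ^ δ with hQ
  set a := u r with ha
  set b := v r with hb
  set p := u' r with hp
  set q := v' r with hq
  have hm0 : m ≠ 0 := by rw [hm]; positivity
  have hd0 : d ≠ 0 := by rw [hd]; positivity
  have ha0 : a ≠ 0 := hru.ne'
  have hb0 : b ≠ 0 := hrv.ne'
  clear_value m d A U V P Q a b p q
  clear * - hr1 hs hm0 hd0 ha0 hb0
  field_simp
  ring
end

section
/- Let N > 2, s > 0, α = 1/(μ+1), β = 1/(δ+1) with α, β > 0, and suppose N(α+β)/(N-2) - 1 ≤ (s/2)·min(α, β) and N(α+β) - (N-2) > 0. Then the cubic B(X,Y) = β X²(N-2-X) + α Y²(N-2-Y) + XY[βX + αY + (2/s)(N-2 - Nα - Nβ)] is nonnegative on the boundary of the square [0,N-2]² and strictly positive on its interior except at (0,0). -/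
/-- Auxiliary cubic positivity: F = X²(m−X)+Y²(m−Y)+XY(X+Y)−mXY > 0 in the open square. -/
lemma aux_F_pos (m X Y : ℝ) (hX : 0 < X) (hXm : X < m) (hY : 0 < Y) (hYm : Y < m) :
    0 < X ^ 2 * (m - X) + Y ^ 2 * (m - Y) + X * Y * (X + Y) - m * X * Y := by
  rcases le_total X Y with h | h
  · -- F = (m−Y)(X²−XY+Y²) + X²(2Y−X)
    nlinarith [mul_pos (sub_pos.2 hYm) (by nlinarith [sq_nonneg (X - Y), mul_pos hX hY] :
      (0:ℝ) < X ^ 2 - X * Y + Y ^ 2), mul_pos (pow_pos hX 2) (by linarith : (0:ℝ) < 2 * Y - X)]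
  · nlinarith [mul_pos (sub_pos.2 hXm) (by nlinarith [sq_nonneg (X - Y), mul_pos hX hY] :
      (0:ℝ) < X ^ 2 - X * Y + Y ^ 2), mul_pos (pow_pos hY 2) (by linarith : (0:ℝ) < 2 * X - Y)]

/-- Interior positivity helper, in the case α ≤ β (so min α β = α). -/
lemma aux_interior (m α β C X Y : ℝ) (hm : 0 < m) (hα : 0 < α) (hab : α ≤ β)
    (hC : -(m * α) ≤ C) (hX : 0 < X) (hXm : X < m) (hY : 0 < Y) (hYm : Y < m) :
    0 < β * X ^ 2 * (m - X) + α * Y ^ 2 * (m - Y) + X * Y * (β * X + α * Y + C) := by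
  have hF := aux_F_pos m X Y hX hXm hY hYm
  have h1 : 0 ≤ (β - α) * (X ^ 2 * (m - X + Y)) :=
    mul_nonneg (by linarith) (by nlinarith [sq_nonneg X])
  have h2 : 0 ≤ X * Y * (C + m * α) :=
    mul_nonneg (mul_pos hX hY).le (by linarith)
  nlinarith [mul_pos hα hF]

/-- positivity of the cubic B on the square [0,N-2]²:
nonnegative on the boundary and strictly positive in the interior, under
the condition N(α+β)/(N-2) - 1 ≤ (s/2)min(α,β) (with N(α+β) > N-2). -/
theorem cubic_positivity
    (N s δ μ α β : ℝ)
    (hN : 2 < N) (hs : 0 < s) (hδ : 0 < δ) (hμ : 0 < μ)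
    (hα : α = 1 / (μ + 1)) (hβ : β = 1 / (δ + 1))
    (h1 : N * (α + β) / (N - 2) - 1 ≤ s / 2 * min α β)
    (h2 : 0 < N * (α + β) - (N - 2)) :
    (∀ X Y : ℝ, X ∈ Set.Icc 0 (N - 2) → Y ∈ Set.Icc 0 (N - 2) →
      (X = 0 ∨ X = N - 2 ∨ Y = 0 ∨ Y = N - 2) →
      0 ≤ β * X ^ 2 * (N - 2 - X) + α * Y ^ 2 * (N - 2 - Y)
        + X * Y * (β * X + α * Y + 2 / s * (N - 2 - N * α - N * β))) ∧
    (∀ X Y : ℝ, X ∈ Set.Ioo 0 (N - 2) → Y ∈ Set.Ioo 0 (N - 2) →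
      0 < β * X ^ 2 * (N - 2 - X) + α * Y ^ 2 * (N - 2 - Y)
        + X * Y * (β * X + α * Y + 2 / s * (N - 2 - N * α - N * β))) := by
  have hm : (0:ℝ) < N - 2 := by linarith
  have hα0 : 0 < α := by rw [hα]; positivity
  have hβ0 : 0 < β := by rw [hβ]; positivity
  -- key estimate: C := (2/s)(N-2-Nα-Nβ) ≥ -(N-2)·min α β
  have hC : -((N - 2) * min α β) ≤ 2 / s * (N - 2 - N * α - N * β) := by
    have h1' : N * (α + β) - (N - 2) ≤ s / 2 * min α β * (N - 2) := by
      have := (div_le_iff₀ hm).mp (by linarith [h1] : N * (α + β) / (N - 2) ≤ s / 2 * min α β + 1)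
      linarith
    have hss : 2 / s * (s / 2) = 1 := by field_simp
    have h2s : 0 < 2 / s := by positivity
    nlinarith [mul_le_mul_of_nonneg_left h1' h2s.le]
  constructor
  · rintro X Y ⟨hX0, hXm⟩ ⟨hY0, hYm⟩ (rfl | rfl | rfl | rfl)
    · nlinarith [mul_nonneg (mul_nonneg hα0.le (sq_nonneg Y)) (by linarith : (0:ℝ) ≤ N - 2 - Y)]
    · -- X = N - 2 : B = αY²(m−Y) + mY(βm + αY + C), and βm + C ≥ βm − m·min ≥ 0
      have hmin : min α β ≤ β := min_le_right _ _
      have hfac : 0 ≤ β * (N - 2) + α * Y + 2 / s * (N - 2 - N * α - N * β) := by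
        nlinarith [mul_le_mul_of_nonneg_left hmin hm.le, mul_nonneg hα0.le hY0]
      have := mul_nonneg (mul_nonneg hm.le hY0) hfac
      nlinarith [mul_nonneg (mul_nonneg hα0.le (sq_nonneg Y)) (by linarith : (0:ℝ) ≤ N - 2 - Y)]
    · nlinarith [mul_nonneg (mul_nonneg hβ0.le (sq_nonneg X)) (by linarith : (0:ℝ) ≤ N - 2 - X)]
    · have hmin : min α β ≤ α := min_le_left _ _
      have hfac : 0 ≤ β * X + α * (N - 2) + 2 / s * (N - 2 - N * α - N * β) := by
        nlinarith [mul_le_mul_of_nonneg_left hmin hm.le, mul_nonneg hβ0.le hX0]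
      have := mul_nonneg (mul_nonneg hX0 hm.le) hfac
      nlinarith [mul_nonneg (mul_nonneg hβ0.le (sq_nonneg X)) (by linarith : (0:ℝ) ≤ N - 2 - X)]
  · rintro X Y ⟨hX0, hXm⟩ ⟨hY0, hYm⟩
    rcases le_total α β with hab | hab
    · have hmin : min α β = α := min_eq_left hab
      rw [hmin] at hC
      exact aux_interior (N - 2) α β (2 / s * (N - 2 - N * α - N * β)) X Y hm hα0 hab (by linarith) hX0 hXm hY0 hYm
    · have hmin : min α β = β := min_eq_right hab
      rw [hmin] at hC
      have := aux_interior (N - 2) β α (2 / s * (N - 2 - N * α - N * β)) Y X hm hβ0 hab (by linarith) hY0 hYm hX0 hXm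
      exact this.trans_eq (by ring)
end

section
/- For the potential system -Δ_p u = r^a u^s v^{m+1}, -Δ_q v = r^a u^{s+1} v^m, the energy E_P(r) = r^N[(s+1)(|u'|^p/p' + ((N-p)/p) u|u'|^{p-2}u'/r) + (m+1)(|v'|^q/q' + ((N-q)/q) v|v'|^{q-2}v'/r) + r^a u^{s+1} v^{m+1}] satisfies E_P'(r) = (N + a - (s+1)(N-p)/p - (m+1)(N-q)/q) · r^{N-1+a} u^{s+1} v^{m+1} along positive radial solutions. In particular E_P is constant on the critical line N + a = (m+1)(N-q)/q + (s+1)(N-p)/p. -/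
lemma pep_aux1 (N p r y : ℝ) (hp : 1 < p) (hr : 0 < r) :
    |r ^ (N-1) * |y| ^ (p-2) * y| ^ (p/(p-1)) = r ^ ((N-1)*(p/(p-1))) * |y| ^ p := by
  have hp1 : (0:ℝ) < p - 1 := by linarith
  have hp0 : (0:ℝ) < p := by linarith
  have habs : |r ^ (N-1) * |y| ^ (p-2) * y| = r ^ (N-1) * (|y| ^ (p-2) * |y|) := by
    rw [abs_mul, abs_mul, abs_of_nonneg (Real.rpow_nonneg hr.le _),
      abs_of_nonneg (Real.rpow_nonneg (abs_nonneg y) _), mul_assoc]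
  rw [habs]
  rcases eq_or_ne y 0 with h0 | h0
  · subst h0
    simp only [abs_zero, mul_zero]
    rw [Real.zero_rpow (by positivity : p/(p-1) ≠ 0), Real.zero_rpow hp0.ne', mul_zero]
  · have hy : (0:ℝ) < |y| := abs_pos.mpr h0
    have h1 : |y| ^ (p-2) * |y| = |y| ^ (p-1) := by
      rw [show p-1 = (p-2)+1 by ring, Real.rpow_add hy, Real.rpow_one]
    rw [h1, Real.mul_rpow (Real.rpow_nonneg hr.le _) (Real.rpow_nonneg hy.le _),
      ← Real.rpow_mul hr.le, ← Real.rpow_mul hy.le,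
      show (p-1)*(p/(p-1)) = p by field_simp]

lemma pep_aux2 (N p r y : ℝ) (hp : 1 < p) (hr : 0 < r) :
    |r ^ (N-1) * |y| ^ (p-2) * y| ^ (p/(p-1) - 2) * (r ^ (N-1) * |y| ^ (p-2) * y)
      = r ^ ((N-1)*(p/(p-1)-1)) * y := by
  have hp1 : (0:ℝ) < p - 1 := by linarith
  have hp0 : (0:ℝ) < p := by linarith
  rcases eq_or_ne y 0 with h0 | h0
  · subst h0; simp
  · have hy : (0:ℝ) < |y| := abs_pos.mpr h0
    have habs : |r ^ (N-1) * |y| ^ (p-2) * y| = r ^ (N-1) * |y| ^ (p-1) := by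
      rw [abs_mul, abs_mul, abs_of_nonneg (Real.rpow_nonneg hr.le _),
        abs_of_nonneg (Real.rpow_nonneg (abs_nonneg y) _), mul_assoc,
        show p-1 = (p-2)+1 by ring, Real.rpow_add hy, Real.rpow_one]
    rw [habs, Real.mul_rpow (Real.rpow_nonneg hr.le _) (Real.rpow_nonneg hy.le _),
      ← Real.rpow_mul hr.le, ← Real.rpow_mul hy.le]
    have e1 : r ^ ((N-1)*(p/(p-1)-2)) * r ^ (N-1) = r ^ ((N-1)*(p/(p-1)-1)) := by
      rw [← Real.rpow_add hr]; ring_nf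
    have e2 : |y| ^ ((p-1)*(p/(p-1)-2)) * |y| ^ (p-2) = 1 := by
      rw [← Real.rpow_add hy, show (p-1)*(p/(p-1)-2) + (p-2) = 0 by field_simp; ring,
        Real.rpow_zero]
    calc r ^ ((N-1)*(p/(p-1)-2)) * |y| ^ ((p-1)*(p/(p-1)-2))
          * (r ^ (N-1) * |y| ^ (p-2) * y)
        = (r ^ ((N-1)*(p/(p-1)-2)) * r ^ (N-1)) * (|y| ^ ((p-1)*(p/(p-1)-2)) * |y| ^ (p-2)) * y := by ring
      _ = r ^ ((N-1)*(p/(p-1)-1)) * y := by rw [e1, e2, mul_one]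

lemma pep_aux3 (p y : ℝ) (hp : 1 < p) : y * (|y| ^ (p-2) * y) = |y| ^ p := by
  rcases eq_or_ne y 0 with h0 | h0
  · subst h0; simp [Real.zero_rpow (by positivity : p ≠ 0)]
  · have hy : (0:ℝ) < |y| := abs_pos.mpr h0
    have h2 : |y| ^ (2:ℝ) = y * y := by
      rw [show (2:ℝ) = ((2:ℕ):ℝ) by norm_num, Real.rpow_natCast, sq_abs, sq]
    rw [show p = (p-2)+2 by ring, Real.rpow_add hy]
    rw [show (p-2+2:ℝ)-2 = p-2 by ring, h2]
    ring

lemma pep_piece (N p : ℝ) (hp : 1 < p) {r : ℝ} (hr : 0 < r) {u' : ℝ → ℝ} {W' : ℝ}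
    (hw : HasDerivAt (fun ρ => ρ ^ (N-1) * |u' ρ| ^ (p-2) * u' ρ) W' r) :
    HasDerivAt
      (fun ρ => (p-1)/p * (ρ ^ (N-(N-1)*(p/(p-1))) * |ρ ^ (N-1) * |u' ρ| ^ (p-2) * u' ρ| ^ (p/(p-1))))
      ((p-N)/p * (r ^ (N-1) * |u' r| ^ p) + r * (u' r * W')) r := by
  have hp1 : (0:ℝ) < p - 1 := by linarith
  have hp0 : (0:ℝ) < p := by linarith
  have hp' : 1 < p/(p-1) := (one_lt_div hp1).mpr (by linarith)
  have h3 : HasDerivAt (fun ρ => |ρ ^ (N-1) * |u' ρ| ^ (p-2) * u' ρ| ^ (p/(p-1)))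
      ((p/(p-1)) * |r ^ (N-1) * |u' r| ^ (p-2) * u' r| ^ (p/(p-1) - 2)
        * (r ^ (N-1) * |u' r| ^ (p-2) * u' r) * W') r :=
    by have := (hasDerivAt_abs_rpow (r ^ (N-1) * |u' r| ^ (p-2) * u' r) hp').comp r hw; exact this
  have h1 : HasDerivAt (fun ρ : ℝ => ρ ^ (N-(N-1)*(p/(p-1))))
      ((N-(N-1)*(p/(p-1))) * r ^ (N-(N-1)*(p/(p-1)) - 1)) r :=
    Real.hasDerivAt_rpow_const (Or.inl hr.ne')
  have h4 := (h1.mul h3).const_mul ((p-1)/p)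
  refine h4.congr_deriv (Eq.symm ?_)
  rw [mul_assoc (p/(p-1)), pep_aux2 N p r (u' r) hp hr, pep_aux1 N p r (u' r) hp hr]
  have d1 : (p-1)/p * (N-(N-1)*(p/(p-1))) = (p-N)/p := by field_simp; ring
  have d2 : (p-1)/p * (p/(p-1)) = 1 := by field_simp
  have c1 : r ^ (N-(N-1)*(p/(p-1)) - 1) * r ^ ((N-1)*(p/(p-1))) = r ^ (N-1) := by
    rw [← Real.rpow_add hr]; congr 1; ring
  have c2 : r ^ (N-(N-1)*(p/(p-1))) * r ^ ((N-1)*(p/(p-1)-1)) = r := by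
    rw [← Real.rpow_add hr, show N-(N-1)*(p/(p-1)) + (N-1)*(p/(p-1)-1) = 1 by ring,
      Real.rpow_one]
  linear_combination (-((p-N)/p * |u' r| ^ p)) * c1 + (-(u' r * W')) * c2
    + (-(r ^ (N-(N-1)*(p/(p-1)) - 1) * r ^ ((N-1)*(p/(p-1))) * |u' r| ^ p)) * d1
    + (-(r ^ (N-(N-1)*(p/(p-1))) * r ^ ((N-1)*(p/(p-1)-1)) * u' r * W')) * d2

/-- for the potential system -Δ_p u = r^a u^s v^{m+1},
-Δ_q v = r^a u^{s+1} v^m, the energy E_P satisfies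
E_P'(r) = (N + a - (s+1)(N-p)/p - (m+1)(N-q)/q) r^{N-1+a} u^{s+1} v^{m+1};
in particular E_P is constant on the critical line
N + a = (m+1)(N-q)/q + (s+1)(N-p)/p. -/
theorem potential_energy_derivative
    (N p q a s m : ℝ) (R₁ R₂ : ℝ)
    (hp : 1 < p) (hpN : p < N) (hq : 1 < q) (hqN : q < N)
    (hpa : 0 < p + a) (hs : 0 ≤ s) (hm : 0 ≤ m)
    (hD : 0 < p * (1 + m) + q * (1 + s) - p * q)
    (hR₁ : 0 < R₁) (hR : R₁ < R₂)
    (u v u' v' : ℝ → ℝ)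
    (hu : ∀ r ∈ Set.Ioo R₁ R₂, HasDerivAt u (u' r) r)
    (hv : ∀ r ∈ Set.Ioo R₁ R₂, HasDerivAt v (v' r) r)
    (hupos : ∀ r ∈ Set.Ioo R₁ R₂, 0 < u r)
    (hvpos : ∀ r ∈ Set.Ioo R₁ R₂, 0 < v r)
    (hpde1 : ∀ r ∈ Set.Ioo R₁ R₂,
      HasDerivAt (fun ρ => ρ ^ (N - 1) * |u' ρ| ^ (p - 2) * u' ρ)
        (-(r ^ (N - 1 + a) * u r ^ s * v r ^ (m + 1))) r)
    (hpde2 : ∀ r ∈ Set.Ioo R₁ R₂,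
      HasDerivAt (fun ρ => ρ ^ (N - 1) * |v' ρ| ^ (q - 2) * v' ρ)
        (-(r ^ (N - 1 + a) * u r ^ (s + 1) * v r ^ m)) r)
    (E : ℝ → ℝ)
    (hE : ∀ r, E r = r ^ N * ((s + 1) * (|u' r| ^ p / (p / (p - 1))
        + (N - p) / p * u r * |u' r| ^ (p - 2) * u' r / r)
        + (m + 1) * (|v' r| ^ q / (q / (q - 1))
        + (N - q) / q * v r * |v' r| ^ (q - 2) * v' r / r)
        + r ^ a * u r ^ (s + 1) * v r ^ (m + 1))) :
    (∀ r ∈ Set.Ioo R₁ R₂,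
      HasDerivAt E
        ((N + a - (s + 1) * (N - p) / p - (m + 1) * (N - q) / q)
          * r ^ (N - 1 + a) * u r ^ (s + 1) * v r ^ (m + 1)) r) ∧
    (N + a = (m + 1) * (N - q) / q + (s + 1) * (N - p) / p →
      ∀ r₁ ∈ Set.Ioo R₁ R₂, ∀ r₂ ∈ Set.Ioo R₁ R₂, E r₁ = E r₂) := by
  have key : ∀ r ∈ Set.Ioo R₁ R₂,
      HasDerivAt E
        ((N + a - (s + 1) * (N - p) / p - (m + 1) * (N - q) / q)
          * r ^ (N - 1 + a) * u r ^ (s + 1) * v r ^ (m + 1)) r := by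
    intro r hrm
    have hr0 : (0:ℝ) < r := hR₁.trans hrm.1
    have hu0 : 0 < u r := hupos r hrm
    have hv0 : 0 < v r := hvpos r hrm
    have hGp := pep_piece N p hp hr0 (hpde1 r hrm)
    have hGq := pep_piece N q hq hr0 (hpde2 r hrm)
    have h5 : HasDerivAt (fun ρ => u ρ * (ρ ^ (N-1) * |u' ρ| ^ (p-2) * u' ρ))
        (u' r * (r ^ (N-1) * |u' r| ^ (p-2) * u' r)
          + u r * -(r ^ (N-1+a) * u r ^ s * v r ^ (m+1))) r :=
      (hu r hrm).mul (hpde1 r hrm)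
    have h5q : HasDerivAt (fun ρ => v ρ * (ρ ^ (N-1) * |v' ρ| ^ (q-2) * v' ρ))
        (v' r * (r ^ (N-1) * |v' r| ^ (q-2) * v' r)
          + v r * -(r ^ (N-1+a) * u r ^ (s+1) * v r ^ m)) r :=
      (hv r hrm).mul (hpde2 r hrm)
    have h6 : HasDerivAt (fun ρ => u ρ ^ (s+1)) (u' r * (s+1) * u r ^ (s+1-1)) r :=
      (hu r hrm).rpow_const (Or.inl hu0.ne')
    have h7 : HasDerivAt (fun ρ => v ρ ^ (m+1)) (v' r * (m+1) * v r ^ (m+1-1)) r :=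
      (hv r hrm).rpow_const (Or.inl hv0.ne')
    have h8 : HasDerivAt (fun ρ : ℝ => ρ ^ (N+a)) ((N+a) * r ^ (N+a-1)) r :=
      Real.hasDerivAt_rpow_const (Or.inl hr0.ne')
    have h9 : HasDerivAt (fun ρ : ℝ => ρ ^ (N+a) * (u ρ ^ (s+1) * v ρ ^ (m+1)))
        ((N+a) * r ^ (N+a-1) * (u r ^ (s+1) * v r ^ (m+1))
          + r ^ (N+a) * (u' r * (s+1) * u r ^ (s+1-1) * v r ^ (m+1)
            + u r ^ (s+1) * (v' r * (m+1) * v r ^ (m+1-1)))) r :=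
      h8.mul (h6.mul h7)
    have hG : HasDerivAt
        (fun ρ => (s+1) * ((p-1)/p * (ρ ^ (N-(N-1)*(p/(p-1)))
              * |ρ ^ (N-1) * |u' ρ| ^ (p-2) * u' ρ| ^ (p/(p-1)))
            + (N-p)/p * (u ρ * (ρ ^ (N-1) * |u' ρ| ^ (p-2) * u' ρ)))
          + (m+1) * ((q-1)/q * (ρ ^ (N-(N-1)*(q/(q-1)))
              * |ρ ^ (N-1) * |v' ρ| ^ (q-2) * v' ρ| ^ (q/(q-1)))
            + (N-q)/q * (v ρ * (ρ ^ (N-1) * |v' ρ| ^ (q-2) * v' ρ)))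
          + ρ ^ (N+a) * (u ρ ^ (s+1) * v ρ ^ (m+1)))
        ((s+1) * (((p-N)/p * (r ^ (N-1) * |u' r| ^ p)
              + r * (u' r * -(r ^ (N-1+a) * u r ^ s * v r ^ (m+1))))
            + (N-p)/p * (u' r * (r ^ (N-1) * |u' r| ^ (p-2) * u' r)
              + u r * -(r ^ (N-1+a) * u r ^ s * v r ^ (m+1))))
          + (m+1) * (((q-N)/q * (r ^ (N-1) * |v' r| ^ q)
              + r * (v' r * -(r ^ (N-1+a) * u r ^ (s+1) * v r ^ m)))
            + (N-q)/q * (v' r * (r ^ (N-1) * |v' r| ^ (q-2) * v' r)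
              + v r * -(r ^ (N-1+a) * u r ^ (s+1) * v r ^ m)))
          + ((N+a) * r ^ (N+a-1) * (u r ^ (s+1) * v r ^ (m+1))
            + r ^ (N+a) * (u' r * (s+1) * u r ^ (s+1-1) * v r ^ (m+1)
              + u r ^ (s+1) * (v' r * (m+1) * v r ^ (m+1-1))))) r :=
      (((hGp.add (h5.const_mul ((N-p)/p))).const_mul (s+1)).add
        ((hGq.add (h5q.const_mul ((N-q)/q))).const_mul (m+1))).add h9
    have hEG : E =ᶠ[nhds r]
        (fun ρ => (s+1) * ((p-1)/p * (ρ ^ (N-(N-1)*(p/(p-1)))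
              * |ρ ^ (N-1) * |u' ρ| ^ (p-2) * u' ρ| ^ (p/(p-1)))
            + (N-p)/p * (u ρ * (ρ ^ (N-1) * |u' ρ| ^ (p-2) * u' ρ)))
          + (m+1) * ((q-1)/q * (ρ ^ (N-(N-1)*(q/(q-1)))
              * |ρ ^ (N-1) * |v' ρ| ^ (q-2) * v' ρ| ^ (q/(q-1)))
            + (N-q)/q * (v ρ * (ρ ^ (N-1) * |v' ρ| ^ (q-2) * v' ρ)))
          + ρ ^ (N+a) * (u ρ ^ (s+1) * v ρ ^ (m+1))) := by
      filter_upwards [Ioo_mem_nhds hrm.1 hrm.2] with ρ hρm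
      have hρ : (0:ℝ) < ρ := hR₁.trans hρm.1
      have hN : ρ ^ N = ρ ^ (N-1) * ρ := by
        rw [show ρ ^ N = ρ ^ ((N-1)+1) from by congr 1; ring, Real.rpow_add hρ,
          Real.rpow_one]
      have f1p : ρ ^ (N-(N-1)*(p/(p-1))) * ρ ^ ((N-1)*(p/(p-1))) = ρ ^ (N-1) * ρ := by
        rw [← Real.rpow_add hρ,
          show N-(N-1)*(p/(p-1)) + (N-1)*(p/(p-1)) = N by ring, hN]
      have f1q : ρ ^ (N-(N-1)*(q/(q-1))) * ρ ^ ((N-1)*(q/(q-1))) = ρ ^ (N-1) * ρ := by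
        rw [← Real.rpow_add hρ,
          show N-(N-1)*(q/(q-1)) + (N-1)*(q/(q-1)) = N by ring, hN]
      have f3 : ρ ^ (N+a) = ρ ^ (N-1) * ρ * ρ ^ a := by
        rw [Real.rpow_add hρ, hN]
      have finv : ρ * ρ⁻¹ = 1 := mul_inv_cancel₀ hρ.ne'
      rw [hE ρ, pep_aux1 N p ρ (u' ρ) hp hρ, pep_aux1 N q ρ (v' ρ) hq hρ]
      simp only [div_div_eq_mul_div]
      linear_combination
        ((s+1)*((p-1)/p)*|u' ρ| ^ p + (m+1)*((q-1)/q)*|v' ρ| ^ q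
          + (s+1)*((N-p)/p)*(u ρ)*(|u' ρ| ^ (p-2))*(u' ρ)*ρ⁻¹
          + (m+1)*((N-q)/q)*(v ρ)*(|v' ρ| ^ (q-2))*(v' ρ)*ρ⁻¹
          + u ρ ^ (s+1) * v ρ ^ (m+1) * ρ ^ a) * hN
        + (-(s+1)*((p-1)/p)*|u' ρ| ^ p) * f1p
        + (-(m+1)*((q-1)/q)*|v' ρ| ^ q) * f1q
        + ((s+1)*((N-p)/p)*(u ρ)*(|u' ρ| ^ (p-2))*(u' ρ)*(ρ ^ (N-1))
          + (m+1)*((N-q)/q)*(v ρ)*(|v' ρ| ^ (q-2))*(v' ρ)*(ρ ^ (N-1))) * finv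
        + (-(u ρ ^ (s+1) * v ρ ^ (m+1))) * f3
    have final := hG.congr_of_eventuallyEq hEG
    refine final.congr_deriv (Eq.symm ?_)
    have e3 : r ^ (N+a) = r * r ^ (N-1+a) := by
      rw [show r ^ (N+a) = r ^ (1+(N-1+a)) from by congr 1; ring, Real.rpow_add hr0,
        Real.rpow_one]
    have e4 : r ^ (N+a-1) = r ^ (N-1+a) := by congr 1; ring
    have e5 : u r ^ (s+1) = u r ^ s * u r := by rw [Real.rpow_add hu0, Real.rpow_one]
    have e6 : u r ^ (s+1-1) = u r ^ s := by congr 1; ring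
    have e7 : v r ^ (m+1) = v r ^ m * v r := by rw [Real.rpow_add hv0, Real.rpow_one]
    have e8 : v r ^ (m+1-1) = v r ^ m := by congr 1; ring
    have g1 : u' r * (r ^ (N-1) * |u' r| ^ (p-2) * u' r) = r ^ (N-1) * |u' r| ^ p := by
      rw [← pep_aux3 p (u' r) hp]; ring
    have g2 : v' r * (r ^ (N-1) * |v' r| ^ (q-2) * v' r) = r ^ (N-1) * |v' r| ^ q := by
      rw [← pep_aux3 q (v' r) hq]; ring
    rw [e3, e4, e5, e6, e7, e8, g1, g2]
    ring
  refine ⟨key, fun hcrit r₁ hr₁ r₂ hr₂ => ?_⟩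
  have h0 : N + a - (s + 1) * (N - p) / p - (m + 1) * (N - q) / q = 0 := by linarith
  have main : ∀ x₁ ∈ Set.Ioo R₁ R₂, ∀ x₂ ∈ Set.Ioo R₁ R₂, x₁ < x₂ → E x₁ = E x₂ := by
    intro x₁ hx₁ x₂ hx₂ hlt
    have hsub : Set.Icc x₁ x₂ ⊆ Set.Ioo R₁ R₂ := fun x hx =>
      ⟨hx₁.1.trans_le hx.1, lt_of_le_of_lt hx.2 hx₂.2⟩
    have hcont : ContinuousOn E (Set.Icc x₁ x₂) := fun x hx =>
      ((key x (hsub hx)).continuousAt).continuousWithinAt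
    obtain ⟨c, hc, hceq⟩ := exists_hasDerivAt_eq_slope E
      (fun x => (N + a - (s + 1) * (N - p) / p - (m + 1) * (N - q) / q)
        * x ^ (N - 1 + a) * u x ^ (s + 1) * v x ^ (m + 1)) hlt hcont
      (fun x hx => key x (hsub ⟨hx.1.le, hx.2.le⟩))
    rw [h0, zero_mul, zero_mul, zero_mul] at hceq
    have hne : x₂ - x₁ ≠ 0 := sub_ne_zero.mpr hlt.ne'
    have := (div_eq_zero_iff.mp hceq.symm).resolve_right hne
    linarith [this]
  rcases lt_trichotomy r₁ r₂ with h | h | h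
  · exact main r₁ hr₁ r₂ hr₂ h
  · rw [h]
  · exact (main r₂ hr₂ r₁ hr₁ h).symm
end
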